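/- arXiv:1104.1364 — 6 statements merged into one kernel-verified Lean document; each statement's English description precedes it below -/
import Mathlib

section
/- For real q with |q| < 1, the Lambert series identity holds: ∑_{n=1}^∞ d(n) q^n = ∑_{n=1}^∞ q^n / (1 - q^n), where d(n) is the divisor function. -/
/-- Lambert series identity: `∑ d(n) qⁿ = ∑ qⁿ/(1-qⁿ)` for `|q| < 1`. -/
theorem lambert_series_divisor (q : ℝ) (hq : |q| < 1) :
    ∑' n : ℕ, ((Nat.divisors (n + 1)).card : ℝ) * q ^ (n + 1)
      = ∑' n : ℕ, q ^ (n + 1) / (1 - q ^ (n + 1)) := by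
  set f : ℕ × ℕ → ℝ := fun p => q ^ ((p.1 + 1) * (p.2 + 1)) with hf_def
  -- summability
  have hqn : ∀ n : ℕ, |q ^ (n + 1)| < 1 := fun n => by
    rw [abs_pow]; exact pow_lt_one₀ (abs_nonneg q) hq (Nat.succ_ne_zero n)
  have hsum : Summable f := by
    have hg : Summable (fun p : ℕ × ℕ => |q| ^ p.1 * |q| ^ p.2) :=
      (summable_geometric_of_lt_one (abs_nonneg q) hq).mul_of_nonneg
        (summable_geometric_of_lt_one (abs_nonneg q) hq)
        (fun n => pow_nonneg (abs_nonneg q) n) (fun n => pow_nonneg (abs_nonneg q) n)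
    apply Summable.of_norm_bounded (hg.mul_left |q|)
    intro p
    simp only [Real.norm_eq_abs, abs_pow, hf_def]
    have h : |q| * (|q| ^ p.1 * |q| ^ p.2) = |q| ^ (p.1 + p.2 + 1) := by ring
    rw [h]
    exact pow_le_pow_of_le_one (abs_nonneg q) hq.le (by nlinarith)
  -- RHS
  have hrhs : ∑' n : ℕ, q ^ (n + 1) / (1 - q ^ (n + 1)) = ∑' p : ℕ × ℕ, f p := by
    rw [Summable.tsum_prod hsum]
    refine tsum_congr fun n => ?_
    have h1 : HasSum (fun m : ℕ => (q ^ (n + 1)) ^ m) (1 - q ^ (n + 1))⁻¹ :=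
      hasSum_geometric_of_abs_lt_one (hqn n)
    have h2 : HasSum (fun m : ℕ => q ^ ((n + 1) * (m + 1)))
        (q ^ (n + 1) * (1 - q ^ (n + 1))⁻¹) := by
      have := h1.mul_left (q ^ (n + 1))
      convert this using 2 with m
      · rfl
      rw [pow_mul, ← pow_succ']
    rw [div_eq_mul_inv, ← h2.tsum_eq]
  -- LHS: fiberwise sum
  have hlhs : HasSum (fun k : ℕ => ∑' p : (fun p : ℕ × ℕ => (p.1 + 1) * (p.2 + 1) - 1) ⁻¹' {k}, f p)
      (∑' p : ℕ × ℕ, f p) :=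
    hsum.hasSum.tsum_fiberwise _
  have hfiber : ∀ k : ℕ,
      (∑' p : (fun p : ℕ × ℕ => (p.1 + 1) * (p.2 + 1) - 1) ⁻¹' {k}, f p)
        = ((Nat.divisors (k + 1)).card : ℝ) * q ^ (k + 1) := by
    intro k
    have hset : (fun p : ℕ × ℕ => (p.1 + 1) * (p.2 + 1) - 1) ⁻¹' {k}
        = ↑(((k + 1).divisorsAntidiagonal).image (fun p => (p.1 - 1, p.2 - 1))) := by
      ext ⟨a, b⟩
      simp only [Set.mem_preimage, Set.mem_singleton_iff, Finset.coe_image, Set.mem_image,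
        Finset.mem_coe, Nat.mem_divisorsAntidiagonal]
      constructor
      · intro h
        refine ⟨(a + 1, b + 1), ⟨?_, Nat.succ_ne_zero k⟩, by simp⟩
        show (a + 1) * (b + 1) = k + 1
        have hpos : 0 < (a + 1) * (b + 1) := Nat.mul_pos (Nat.succ_pos a) (Nat.succ_pos b)
        calc (a + 1) * (b + 1) = (a + 1) * (b + 1) - 1 + 1 := (Nat.succ_pred_eq_of_pos hpos).symm
          _ = k + 1 := by rw [h]
      · rintro ⟨⟨c, d⟩, ⟨hcd, -⟩, h⟩
        have hc : c ≠ 0 := by rintro rfl; simp at hcd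
        have hd : d ≠ 0 := by rintro rfl; simp at hcd
        simp only [Prod.mk.injEq] at h
        obtain ⟨rfl, rfl⟩ := h
        have h1 : c - 1 + 1 = c := by omega
        have h2 : d - 1 + 1 = d := by omega
        rw [h1, h2, hcd]
        omega
    rw [hset, Finset.tsum_subtype']
    rw [Finset.sum_image (by
      rintro ⟨a, b⟩ ha ⟨c, d⟩ hc h
      rw [Finset.mem_coe, Nat.mem_divisorsAntidiagonal] at ha hc
      have ha0 : a ≠ 0 ∧ b ≠ 0 := by
        constructor <;> rintro rfl <;> simp at ha
      have hc0 : c ≠ 0 ∧ d ≠ 0 := by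
        constructor <;> rintro rfl <;> simp at hc
      simp only [Prod.mk.injEq] at h ⊢
      omega)]
    have hconst : ∀ p ∈ (k + 1).divisorsAntidiagonal,
        f (p.1 - 1, p.2 - 1) = q ^ (k + 1) := by
      rintro ⟨a, b⟩ hab
      rw [Nat.mem_divisorsAntidiagonal] at hab
      have ha : a ≠ 0 := by rintro rfl; simp at hab
      have hb : b ≠ 0 := by rintro rfl; simp at hab
      simp only [hf_def]
      congr 1
      have h1 : a - 1 + 1 = a := by omega
      have h2 : b - 1 + 1 = b := by omega
      rw [h1, h2, hab.1]
    rw [Finset.sum_congr rfl hconst, Finset.sum_const, nsmul_eq_mul]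
    congr 2
    -- card of antidiagonal = card of divisors
    rw [← Nat.image_fst_divisorsAntidiagonal]
    rw [Finset.card_image_of_injOn]
    rintro ⟨a, b⟩ ha ⟨c, d⟩ hc h
    simp only [Finset.mem_coe, Nat.mem_divisorsAntidiagonal] at ha hc
    simp only at h
    subst h
    have ha0 : a ≠ 0 := by rintro rfl; simp at ha
    simp only [Prod.mk.injEq, true_and]
    exact Nat.eq_of_mul_eq_mul_left (Nat.pos_of_ne_zero ha0) (ha.1.trans hc.1.symm)
  rw [hrhs]
  refine ((hlhs.congr_fun ?_).tsum_eq)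
  exact fun k => (hfiber k).symm
end

section
/- The summatory divisor function satisfies Dirichlet's asymptotic formula: ∑_{n ≤ x} d(n) = x ln x + (2γ - 1) x + O(√x) as x → ∞, where γ is the Euler–Mascheroni constant. -/
open Filter Asymptotics Finset

section Comb
open Finset


private def dirS (N : ℕ) : Finset (ℕ × ℕ) :=
  (Icc 1 N ×ˢ Icc 1 N).filter (fun p => p.1 * p.2 ≤ N)

private lemma dirS_card (N : ℕ) :
    (∑ n ∈ Icc 1 N, (Nat.divisors n).card) = (dirS N).card := by
  rw [Finset.card_eq_sum_card_fiberwise (f := fun p => p.1 * p.2) (t := Icc 1 N)]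
  · refine Finset.sum_congr rfl (fun n hn => ?_)
    simp only [mem_Icc] at hn
    have : (Nat.divisorsAntidiagonal n).card = n.divisors.card := by
      rw [← Nat.map_div_right_divisors, Finset.card_map]
    rw [← this]
    congr 1
    ext p
    simp only [dirS, Nat.mem_divisorsAntidiagonal, mem_filter, mem_product, mem_Icc]
    constructor
    · intro h
      obtain ⟨h1, h2⟩ := h
      have hp1 : 1 ≤ p.1 := Nat.pos_of_ne_zero (fun h => by simp [h] at h1; omega)
      have hp2 : 1 ≤ p.2 := Nat.pos_of_ne_zero (fun h => by simp [h] at h1; omega)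
      have e1 : p.1 ≤ n := le_of_le_of_eq (Nat.le_mul_of_pos_right _ hp2) h1
      have e2 : p.2 ≤ n := le_of_le_of_eq (Nat.le_mul_of_pos_left _ hp1) h1
      exact ⟨⟨⟨⟨hp1, e1.trans hn.2⟩, hp2, e2.trans hn.2⟩, le_of_le_of_eq (le_of_eq h1) (by omega) |>.trans hn.2⟩, h1⟩
    · intro h
      obtain ⟨⟨_, _⟩, h6⟩ := h
      exact ⟨h6, by omega⟩
  · intro p hp
    simp only [Finset.mem_coe, dirS, mem_filter, mem_product, mem_Icc] at hp
    simp only [Finset.mem_coe, mem_Icc]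
    exact ⟨Nat.one_le_iff_ne_zero.2 (Nat.mul_ne_zero (by omega) (by omega)), hp.2⟩

private lemma dirA_card (N K : ℕ) (hK : K ≤ N) :
    ((dirS N).filter (fun p => p.1 ≤ K)).card = ∑ a ∈ Icc 1 K, N / a := by
  rw [Finset.card_eq_sum_card_fiberwise (f := Prod.fst) (t := Icc 1 K)]
  · refine Finset.sum_congr rfl (fun a ha => ?_)
    simp only [mem_Icc] at ha
    have ha0 : 0 < a := ha.1
    have : ((dirS N).filter (fun p => p.1 ≤ K)).filter (fun p => p.1 = a)
        = (Icc 1 (N / a)).image (fun b => (a, b)) := by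
      ext p
      simp only [dirS, mem_filter, mem_product, mem_Icc, mem_image]
      constructor
      · rintro ⟨⟨⟨⟨⟨h1, h2⟩, h3, h4⟩, h5⟩, h6⟩, h7⟩
        refine ⟨p.2, ⟨h3, ?_⟩, by rw [← h7]⟩
        rw [Nat.le_div_iff_mul_le ha0, mul_comm]
        rwa [h7] at h5
      · rintro ⟨b, ⟨hb1, hb2⟩, rfl⟩
        rw [Nat.le_div_iff_mul_le ha0] at hb2
        have hbN : b ≤ N := le_trans (Nat.le_of_lt_succ (Nat.lt_succ_of_le
          (le_trans (Nat.le_mul_of_pos_left _ ha0) (by rwa [mul_comm] at hb2)))) le_rfl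
        exact ⟨⟨⟨⟨⟨ha.1, ha.2.trans hK⟩, hb1, hbN⟩, by rwa [mul_comm] at hb2⟩, ha.2⟩, rfl⟩
    rw [this, Finset.card_image_of_injective _ (fun b c h => by simpa using h),
      Nat.card_Icc]
    simp
  · intro p hp
    simp only [Finset.mem_coe, dirS, mem_filter, mem_product, mem_Icc] at hp
    exact mem_Icc.2 ⟨hp.1.1.1.1, hp.2⟩

private lemma dirB_card (N K : ℕ) (hK : K ≤ N) :
    ((dirS N).filter (fun p => p.2 ≤ K)).card = ∑ a ∈ Icc 1 K, N / a := by
  rw [← dirA_card N K hK]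
  have : (dirS N).filter (fun p => p.2 ≤ K)
      = ((dirS N).filter (fun p => p.1 ≤ K)).image Prod.swap := by
    ext q
    simp only [dirS, mem_filter, mem_product, mem_Icc, mem_image]
    constructor
    · intro h
      refine ⟨q.swap, ?_, Prod.swap_swap q⟩
      simp only [Prod.fst_swap, Prod.snd_swap, mul_comm q.2 q.1]
      tauto
    · rintro ⟨p, hp, rfl⟩
      simp only [Prod.fst_swap, Prod.snd_swap, mul_comm p.2 p.1]
      tauto
  rw [this, Finset.card_image_of_injective _ Prod.swap_injective]

private lemma dirS_hyperbola (N : ℕ) (hN : 1 ≤ N) :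
    (dirS N).card + Nat.sqrt N * Nat.sqrt N = 2 * ∑ a ∈ Icc 1 (Nat.sqrt N), N / a := by
  set K := Nat.sqrt N with hKdef
  have hKN : K ≤ N := Nat.sqrt_le_self N
  have hK2 : K * K ≤ N := by
    have := Nat.sqrt_le' N
    simpa [pow_two] using this
  have hNK : N < (K + 1) * (K + 1) := by
    have := Nat.lt_succ_sqrt' N
    simpa [Nat.succ_eq_add_one, pow_two] using this
  have hunion : (dirS N).filter (fun p => p.1 ≤ K) ∪ (dirS N).filter (fun p => p.2 ≤ K)
      = dirS N := by
    ext p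
    simp only [mem_union, mem_filter, dirS, mem_product, mem_Icc]
    constructor
    · rintro (⟨h, _⟩ | ⟨h, _⟩) <;> exact h
    · intro h
      by_cases h1 : p.1 ≤ K
      · exact Or.inl ⟨h, h1⟩
      · refine Or.inr ⟨h, ?_⟩
        by_contra h2
        push_neg at h1 h2
        have : (K + 1) * (K + 1) ≤ p.1 * p.2 := Nat.mul_le_mul h1 h2
        omega
  have hinter : (dirS N).filter (fun p => p.1 ≤ K) ∩ (dirS N).filter (fun p => p.2 ≤ K)
      = Icc 1 K ×ˢ Icc 1 K := by
    ext p
    simp only [mem_inter, mem_filter, dirS, mem_product, mem_Icc]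
    constructor
    · rintro ⟨⟨⟨⟨⟨h1, _⟩, h3, _⟩, _⟩, h6⟩, _, h7⟩
      exact ⟨⟨h1, h6⟩, h3, h7⟩
    · rintro ⟨⟨h1, h2⟩, h3, h4⟩
      have hmul : p.1 * p.2 ≤ N := le_trans (Nat.mul_le_mul h2 h4) hK2
      exact ⟨⟨⟨⟨⟨h1, h2.trans hKN⟩, h3, h4.trans hKN⟩, hmul⟩, h2⟩,
        ⟨⟨⟨h1, h2.trans hKN⟩, h3, h4.trans hKN⟩, hmul⟩, h4⟩
  have := Finset.card_union_add_card_inter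
    ((dirS N).filter (fun p => p.1 ≤ K)) ((dirS N).filter (fun p => p.2 ≤ K))
  rw [hunion, hinter, dirA_card N K hKN, dirB_card N K hKN, Finset.card_product,
    Nat.card_Icc] at this
  simp only [Nat.add_sub_cancel] at this
  omega

end Comb

section Anal
open Finset Real


private lemma harm_near (K : ℕ) (hK : 1 ≤ K) :
    0 ≤ ((harmonic K : ℚ) : ℝ) - Real.log K - Real.eulerMascheroniConstant ∧
    ((harmonic K : ℚ) : ℝ) - Real.log K - Real.eulerMascheroniConstant ≤ 1 / K := by
  have hK0 : (0:ℝ) < K := by exact_mod_cast hK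
  have h1 : Real.eulerMascheroniConstant < ((harmonic K : ℚ) : ℝ) - Real.log K := by
    have := Real.eulerMascheroniConstant_lt_eulerMascheroniSeq' K
    rwa [Real.eulerMascheroniSeq', if_neg (by omega)] at this
  have h2 : ((harmonic K : ℚ) : ℝ) - Real.log ((K:ℝ) + 1) < Real.eulerMascheroniConstant := by
    have := Real.eulerMascheroniSeq_lt_eulerMascheroniConstant K
    rwa [Real.eulerMascheroniSeq] at this
  have h3 : Real.log ((K:ℝ) + 1) - Real.log K ≤ 1 / K := by
    rw [← Real.log_div (by positivity) (by positivity)]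
    have := Real.log_le_sub_one_of_pos (x := ((K:ℝ) + 1) / K) (by positivity)
    have heq : ((K:ℝ) + 1) / K - 1 = 1 / K := by field_simp; ring
    linarith
  constructor <;> linarith

private lemma natdiv_near (m a : ℕ) (ha : 0 < a) :
    (m:ℝ) / a - 1 ≤ ((m / a : ℕ) : ℝ) ∧ ((m / a : ℕ) : ℝ) ≤ (m:ℝ) / a := by
  have ha0 : (0:ℝ) < a := by exact_mod_cast ha
  constructor
  · have h1 : m < (m / a + 1) * a := by
      have h := Nat.div_add_mod m a
      have := Nat.mod_lt m ha
      nlinarith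
    have h2 : (m:ℝ) < ((m / a : ℕ) + 1) * a := by exact_mod_cast h1
    rw [sub_le_iff_le_add, div_le_iff₀ ha0]
    nlinarith
  · exact Nat.cast_div_le

end Anal

open Finset in
private lemma dirS_identity (N : ℕ) (hN : 1 ≤ N) :
    (∑ n ∈ Icc 1 N, (Nat.divisors n).card) + Nat.sqrt N * Nat.sqrt N
      = 2 * ∑ a ∈ Icc 1 (Nat.sqrt N), N / a := by
  rw [dirS_card]
  exact dirS_hyperbola N hN

set_option maxHeartbeats 1600000 in
/-- Dirichlet's divisor asymptotics:
`∑_{n ≤ x} d(n) = x ln x + (2γ - 1) x + O(√x)` as `x → ∞`. -/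
theorem dirichlet_divisor_asymptotics :
    (fun x : ℝ => (∑ n ∈ Finset.Icc 1 ⌊x⌋₊, ((Nat.divisors n).card : ℝ))
        - (x * Real.log x + (2 * Real.eulerMascheroniConstant - 1) * x))
      =O[atTop] fun x : ℝ => Real.sqrt x := by
  rw [Asymptotics.isBigO_iff]
  refine ⟨20, ?_⟩
  filter_upwards [Filter.eventually_ge_atTop (16:ℝ)] with x hx
  set γ := Real.eulerMascheroniConstant with hγdef
  set N := ⌊x⌋₊ with hNdef
  set K := Nat.sqrt N with hKdef
  have hx0 : (0:ℝ) < x := by linarith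
  have hNx : (N:ℝ) ≤ x := Nat.floor_le hx0.le
  have hxN : x < (N:ℝ) + 1 := Nat.lt_floor_add_one x
  have hN16 : 16 ≤ N := Nat.le_floor (by exact_mod_cast hx)
  have hK4 : 4 ≤ K := Nat.le_sqrt'.mpr (by omega)
  have hK2N : K * K ≤ N := by
    have := Nat.sqrt_le' N
    simpa [pow_two] using this
  have hNK2 : N ≤ K * K + 2 * K := by
    have := Nat.lt_succ_sqrt' N
    simp only [Nat.succ_eq_add_one, pow_two] at this
    nlinarith [this]
  have hKN : K ≤ N := Nat.sqrt_le_self N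
  -- real versions
  have hKr : (4:ℝ) ≤ K := by exact_mod_cast hK4
  have hK0 : (0:ℝ) < K := by linarith
  have hN0 : (0:ℝ) < N := by
    have h16 : (16:ℝ) ≤ N := by exact_mod_cast hN16
    linarith
  have hK2Nr : (K:ℝ) * K ≤ N := by exact_mod_cast hK2N
  have hNK2r : (N:ℝ) ≤ K * K + 2 * K := by exact_mod_cast hNK2
  set s := Real.sqrt x with hsdef
  have hs4 : (4:ℝ) ≤ s := by
    rw [hsdef, show (4:ℝ) = Real.sqrt 16 by rw [show (16:ℝ) = 4^2 by norm_num, Real.sqrt_sq]; norm_num]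
    exact Real.sqrt_le_sqrt hx
  have hs0 : (0:ℝ) < s := by linarith
  have hKs : (K:ℝ) ≤ s := by
    rw [hsdef]
    rw [show (K:ℝ) = Real.sqrt ((K:ℝ)^2) by rw [Real.sqrt_sq (by positivity)]]
    apply Real.sqrt_le_sqrt
    nlinarith
  have hNKs : (N:ℝ) / K ≤ 2 * s := by
    rw [div_le_iff₀ hK0]
    nlinarith
  -- the identity, in ℝ
  set Sg : ℝ := ∑ a ∈ Icc 1 K, ((N / a : ℕ) : ℝ) with hSgdef
  have hidentity : (∑ n ∈ Finset.Icc 1 N, ((Nat.divisors n).card : ℝ))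
      = 2 * Sg - (K:ℝ) * K := by
    have h := dirS_identity N (by omega)
    have h2 := congrArg (Nat.cast : ℕ → ℝ) h
    push_cast at h2 ⊢
    linarith
  set H : ℝ := ((harmonic K : ℚ) : ℝ) with hHdef
  have hHsum : H = ∑ a ∈ Icc 1 K, ((a:ℝ))⁻¹ := by
    rw [hHdef, harmonic_eq_sum_Icc]
    push_cast
    rfl
  -- e1 bounds
  have he1up : Sg - (N:ℝ) * H ≤ 0 := by
    rw [hHsum, Finset.mul_sum, hSgdef, ← Finset.sum_sub_distrib]
    apply Finset.sum_nonpos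
    intro a ha
    have ha1 : 0 < a := (mem_Icc.1 ha).1
    have := (natdiv_near N a ha1).2
    have haa : (N:ℝ) * (a:ℝ)⁻¹ = (N:ℝ) / a := by ring
    linarith [this, haa ▸ this]
  have he1lo : -(K:ℝ) ≤ Sg - (N:ℝ) * H := by
    rw [hHsum, Finset.mul_sum, hSgdef, ← Finset.sum_sub_distrib]
    have : ∑ a ∈ Icc 1 K, (-1 : ℝ) ≤ ∑ a ∈ Icc 1 K, (((N / a : ℕ) : ℝ) - (N:ℝ) * (a:ℝ)⁻¹) := by
      apply Finset.sum_le_sum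
      intro a ha
      have ha1 : 0 < a := (mem_Icc.1 ha).1
      have h := (natdiv_near N a ha1).1
      have haa : (N:ℝ) * (a:ℝ)⁻¹ = (N:ℝ) / a := by ring
      linarith [haa ▸ h]
    simpa [Nat.card_Icc] using this
  -- e2 bounds
  have hharm := harm_near K (by omega)
  have he2lo : 0 ≤ H - Real.log K - γ := hharm.1
  have he2up : H - Real.log K - γ ≤ 1 / K := hharm.2
  -- e3 : 0 ≤ log N - 2 log K ≤ 2 / K
  have hlogKK : Real.log ((K:ℝ) * K) = 2 * Real.log K := by
    rw [Real.log_mul (by positivity) (by positivity)]; ring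
  have he3lo : 0 ≤ Real.log N - 2 * Real.log K := by
    rw [← hlogKK]
    exact sub_nonneg.2 (Real.log_le_log (by positivity) hK2Nr)
  have he3up : Real.log N - 2 * Real.log K ≤ 2 / K := by
    rw [← hlogKK, ← Real.log_div (by positivity) (by positivity)]
    have h1 := Real.log_le_sub_one_of_pos (x := (N:ℝ) / ((K:ℝ) * K)) (by positivity)
    have h2 : (N:ℝ) / ((K:ℝ) * K) - 1 ≤ 2 / K := by
      rw [div_sub_one (by positivity), div_le_div_iff₀ (by positivity) (by positivity)]
      nlinarith
    linarith
  -- e5 bounds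
  have hlogN : Real.log N ≤ Real.log x := Real.log_le_log hN0 hNx
  have hlogx0 : 0 ≤ Real.log x := Real.log_nonneg (by linarith)
  have hlogN0 : 0 ≤ Real.log N := Real.log_nonneg (by linarith)
  have he5a : (N:ℝ) * Real.log N ≤ x * Real.log x := by
    have h1 : (N:ℝ) * Real.log N ≤ (N:ℝ) * Real.log x :=
      mul_le_mul_of_nonneg_left hlogN hN0.le
    have h2 : (N:ℝ) * Real.log x ≤ x * Real.log x :=
      mul_le_mul_of_nonneg_right hNx hlogx0
    linarith
  have he5b : x * Real.log x - (N:ℝ) * Real.log N ≤ Real.log x + 1 := by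
    have h1 : Real.log x - Real.log N ≤ x / N - 1 := by
      rw [← Real.log_div (by positivity) (by positivity)]
      exact Real.log_le_sub_one_of_pos (by positivity)
    have h2 : (N:ℝ) * (x / N - 1) = x - N := by field_simp
    have h3 : (N:ℝ) * (Real.log x - Real.log N) ≤ x - N := by
      have := mul_le_mul_of_nonneg_left h1 hN0.le
      linarith
    have h4 : (x - N) * Real.log x ≤ 1 * Real.log x :=
      mul_le_mul_of_nonneg_right (by linarith) hlogx0
    have h5 : x * Real.log x - (N:ℝ) * Real.log N
        = (x - N) * Real.log x + (N:ℝ) * (Real.log x - Real.log N) := by ring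
    linarith
  have hγlo : (1:ℝ)/2 < γ := Real.one_half_lt_eulerMascheroniConstant
  have hγup : γ < 2/3 := Real.eulerMascheroniConstant_lt_two_thirds
  have hlogxs : Real.log x ≤ 2 * s := by
    have h1 : Real.log s ≤ s - 1 := Real.log_le_sub_one_of_pos hs0
    have h2 : Real.log x = 2 * Real.log s := by
      rw [hsdef, Real.log_sqrt hx0.le]; ring
    linarith
  -- assemble
  have key : (∑ n ∈ Finset.Icc 1 N, ((Nat.divisors n).card : ℝ))
      - (x * Real.log x + (2 * γ - 1) * x)
      = 2 * (Sg - (N:ℝ) * H) + 2 * (N:ℝ) * (H - Real.log K - γ)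
        + (-(N:ℝ)) * (Real.log N - 2 * Real.log K) + ((N:ℝ) - (K:ℝ) * K)
        + (((N:ℝ) * Real.log N + (2 * γ - 1) * N) - (x * Real.log x + (2 * γ - 1) * x)) := by
    rw [hidentity]; ring
  have hb2 : 2 * (N:ℝ) * (H - Real.log K - γ) ≤ 4 * s := by
    have h1 : 2 * (N:ℝ) * (H - Real.log K - γ) ≤ 2 * (N:ℝ) * (1 / K) :=
      mul_le_mul_of_nonneg_left he2up (by linarith)
    have h2 : 2 * (N:ℝ) * (1 / K) = 2 * ((N:ℝ) / K) := by ring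
    linarith
  have hb3 : (N:ℝ) * (Real.log N - 2 * Real.log K) ≤ 4 * s := by
    have h1 : (N:ℝ) * (Real.log N - 2 * Real.log K) ≤ (N:ℝ) * (2 / K) :=
      mul_le_mul_of_nonneg_left he3up hN0.le
    have h2 : (N:ℝ) * (2 / K) = 2 * ((N:ℝ) / K) := by ring
    linarith
  have hb4lo : (0:ℝ) ≤ (N:ℝ) - (K:ℝ) * K := by linarith
  have hb4up : (N:ℝ) - (K:ℝ) * K ≤ 2 * s := by linarith
  have hp2lo : 0 ≤ 2 * (N:ℝ) * (H - Real.log K - γ) :=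
    mul_nonneg (by linarith) he2lo
  have hp3up : (-(N:ℝ)) * (Real.log N - 2 * Real.log K) ≤ 0 :=
    mul_nonpos_of_nonpos_of_nonneg (by linarith) he3lo
  have hp3lo : -(4 * s) ≤ (-(N:ℝ)) * (Real.log N - 2 * Real.log K) := by
    have : (-(N:ℝ)) * (Real.log N - 2 * Real.log K)
        = -((N:ℝ) * (Real.log N - 2 * Real.log K)) := by ring
    linarith [hb3]
  have hp5up : (2 * γ - 1) * ((N:ℝ) - x) ≤ 0 :=
    mul_nonpos_of_nonneg_of_nonpos (by linarith) (by linarith)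
  have hp5lo : -(1:ℝ) ≤ (2 * γ - 1) * ((N:ℝ) - x) := by
    have h1 : (2 * γ - 1) * (x - (N:ℝ)) ≤ 1 * 1 :=
      mul_le_mul (by linarith) (by linarith) (by linarith) (by norm_num)
    have h2 : (2 * γ - 1) * ((N:ℝ) - x) = -((2 * γ - 1) * (x - (N:ℝ))) := by ring
    linarith
  have e5eq : ((N:ℝ) * Real.log N + (2 * γ - 1) * N) - (x * Real.log x + (2 * γ - 1) * x)
      = ((N:ℝ) * Real.log N - x * Real.log x) + (2 * γ - 1) * ((N:ℝ) - x) := by ring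
  rw [Real.norm_eq_abs, Real.norm_eq_abs, abs_of_nonneg (Real.sqrt_nonneg x)]
  rw [abs_le]
  refine ⟨?_, ?_⟩ <;> rw [key, e5eq] <;> linarith
end

section
/- The eigenvalue counting function N(λ) := #{(n,m) ∈ ℕ×ℕ : (nm)² ≤ λ} satisfies the non-standard Weyl asymptotics N(λ) = (√λ/2) ln λ + (2γ - 1)√λ + O(λ^{1/4}) as λ → ∞. -/
open Filter Asymptotics Real Finset


lemma hyperbola (K : ℕ) :
    ((Finset.Icc 1 K ×ˢ Finset.Icc 1 K).filter (fun p => p.1 * p.2 ≤ K)).card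
        + K.sqrt * K.sqrt
      = 2 * ∑ n ∈ Finset.Icc 1 K.sqrt, K / n := by
  set M := K.sqrt with hM
  set S := (Finset.Icc 1 K ×ˢ Finset.Icc 1 K).filter (fun p => p.1 * p.2 ≤ K) with hS
  have hmem : ∀ p : ℕ × ℕ, p ∈ S ↔ 1 ≤ p.1 ∧ 1 ≤ p.2 ∧ p.1 * p.2 ≤ K := by
    intro p
    simp only [hS, Finset.mem_filter, Finset.mem_product, Finset.mem_Icc]
    constructor
    · rintro ⟨⟨⟨h1, _⟩, ⟨h2, _⟩⟩, h3⟩; exact ⟨h1, h2, h3⟩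
    · rintro ⟨h1, h2, h3⟩
      refine ⟨⟨⟨h1, ?_⟩, ⟨h2, ?_⟩⟩, h3⟩
      · calc p.1 ≤ p.1 * p.2 := Nat.le_mul_of_pos_right _ h2
          _ ≤ K := h3
      · calc p.2 ≤ p.1 * p.2 := Nat.le_mul_of_pos_left _ h1
          _ ≤ K := h3
  set A := S.filter (fun p => p.1 ≤ M) with hA
  set B := S.filter (fun p => p.2 ≤ M) with hB
  have hunion : A ∪ B = S := by
    ext p
    simp only [hA, hB, Finset.mem_union, Finset.mem_filter]
    constructor
    · rintro (⟨h, _⟩ | ⟨h, _⟩) <;> exact h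
    · intro h
      by_contra hc
      push_neg at hc
      obtain ⟨h1, h2⟩ := hc
      have h1' : M + 1 ≤ p.1 := h1 h
      have h2' : M + 1 ≤ p.2 := h2 h
      have hK : K < (M + 1) * (M + 1) := by
        have := Nat.lt_succ_sqrt' K
        simpa [hM, pow_two] using this
      have : K < p.1 * p.2 := lt_of_lt_of_le hK (Nat.mul_le_mul h1' h2')
      exact absurd ((hmem p).mp h).2.2 (by omega)
  have hMK : M * M ≤ K := by have := Nat.sqrt_le' K; simpa [hM, pow_two] using this
  have hinter : A ∩ B = Finset.Icc 1 M ×ˢ Finset.Icc 1 M := by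
    ext p
    simp only [hA, hB, Finset.mem_inter, Finset.mem_filter, Finset.mem_product,
      Finset.mem_Icc]
    rw [hmem p]
    constructor
    · rintro ⟨⟨⟨a1, _, _⟩, a2⟩, ⟨⟨_, b1, _⟩, b2⟩⟩
      exact ⟨⟨a1, a2⟩, ⟨b1, b2⟩⟩
    · rintro ⟨⟨a1, a2⟩, ⟨b1, b2⟩⟩
      have : p.1 * p.2 ≤ K := le_trans (Nat.mul_le_mul a2 b2) hMK
      exact ⟨⟨⟨a1, b1, this⟩, a2⟩, ⟨⟨a1, b1, this⟩, b2⟩⟩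
  -- card A
  have hcardA : A.card = ∑ n ∈ Finset.Icc 1 M, K / n := by
    rw [Finset.card_eq_sum_card_fiberwise (f := Prod.fst) (t := Finset.Icc 1 M)
      (fun p hp => by
        simp only [Finset.mem_coe, Finset.mem_Icc]
        have := Finset.mem_filter.mp hp
        exact ⟨((hmem p).mp this.1).1, this.2⟩)]
    refine Finset.sum_congr rfl fun n hn => ?_
    rw [Finset.mem_Icc] at hn
    have hn1 : 1 ≤ n := hn.1
    have hfib : A.filter (fun p => p.1 = n) = {n} ×ˢ Finset.Icc 1 (K / n) := by
      ext p
      simp only [hA, Finset.mem_filter, Finset.mem_product, Finset.mem_singleton,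
        Finset.mem_Icc]
      rw [hmem p]
      constructor
      · rintro ⟨⟨⟨_, h2, h3⟩, _⟩, rfl⟩
        exact ⟨rfl, h2, (Nat.le_div_iff_mul_le hn1).mpr (by rwa [mul_comm] at h3)⟩
      · rintro ⟨rfl, h2, h3⟩
        have h3' : p.1 * p.2 ≤ K := by
          have := (Nat.le_div_iff_mul_le hn1).mp h3
          rwa [mul_comm] at this
        exact ⟨⟨⟨hn1, h2, h3'⟩, hn.2⟩, rfl⟩
    rw [hfib, Finset.card_product, Finset.card_singleton, Nat.card_Icc]
    simp
  -- card B = card A by swap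
  have hcardB : B.card = A.card := by
    apply Finset.card_bij (fun p _ => Prod.swap p)
    · intro p hp
      simp only [hB, Finset.mem_filter] at hp
      simp only [hA, Finset.mem_filter]
      rw [hmem]
      have := (hmem p).mp hp.1
      exact ⟨⟨this.2.1, this.1, by rw [mul_comm]; exact this.2.2⟩, hp.2⟩
    · intro p _ q _ h
      exact Prod.swap_injective h
    · intro p hp
      refine ⟨Prod.swap p, ?_, by simp⟩
      simp only [hA, Finset.mem_filter] at hp
      simp only [hB, Finset.mem_filter]
      rw [hmem]
      have := (hmem p).mp hp.1
      exact ⟨⟨this.2.1, this.1, by rw [mul_comm]; exact this.2.2⟩, hp.2⟩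
  have hkey := Finset.card_union_add_card_inter A B
  rw [hunion, hinter, Finset.card_product, Nat.card_Icc] at hkey
  simp only [Nat.add_sub_cancel] at hkey
  omega


lemma harmonic_est (n : ℕ) (hn : n ≠ 0) :
    |(harmonic n : ℝ) - Real.log n - Real.eulerMascheroniConstant| ≤ 1 / n := by
  have h1 := Real.eulerMascheroniSeq_lt_eulerMascheroniConstant n
  have h2 := Real.eulerMascheroniConstant_lt_eulerMascheroniSeq' n
  rw [Real.eulerMascheroniSeq] at h1
  rw [Real.eulerMascheroniSeq', if_neg hn] at h2
  have hn0 : (0:ℝ) < n := by positivity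
  have hlog : Real.log (n + 1) - Real.log n ≤ 1 / n := by
    rw [← Real.log_div (by positivity) (by positivity)]
    have := Real.log_le_sub_one_of_pos (show (0:ℝ) < (n+1)/n by positivity)
    calc Real.log ((n+1)/n) ≤ (n+1)/n - 1 := this
      _ = 1 / n := by field_simp; ring
  rw [abs_le]
  constructor <;> [linarith; linarith]

lemma main_est (x : ℝ) (hx : 4 ≤ x) :
    |2 * (∑ n ∈ Finset.Icc 1 (Nat.sqrt ⌊x⌋₊), ((⌊x⌋₊ / n : ℕ) : ℝ))
        - ((Nat.sqrt ⌊x⌋₊ : ℝ) * (Nat.sqrt ⌊x⌋₊))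
        - (x * Real.log x + (2 * Real.eulerMascheroniConstant - 1) * x)|
      ≤ 12 * Real.sqrt x := by
  set K := ⌊x⌋₊ with hKdef
  set M := Nat.sqrt K with hMdef
  have hx0 : (0:ℝ) < x := by linarith
  have hK4 : 4 ≤ K := Nat.le_floor (by exact_mod_cast hx)
  have hM2 : 2 ≤ M := by
    have h1 : Nat.sqrt 4 ≤ Nat.sqrt K := Nat.sqrt_le_sqrt hK4
    have h2 : Nat.sqrt 4 = 2 := by rw [show (4:ℕ) = 2^2 by norm_num, Nat.sqrt_eq']
    omega
  have hM0 : (0:ℝ) < M := by exact_mod_cast Nat.lt_of_lt_of_le (by norm_num) hM2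
  have hKx : (K:ℝ) ≤ x := Nat.floor_le hx0.le
  have hMMK : (M:ℝ) * M ≤ K := by
    have := Nat.sqrt_le' K
    rw [pow_two] at this
    exact_mod_cast this
  have hsx2 : 2 ≤ Real.sqrt x := by
    rw [show (2:ℝ) = Real.sqrt 4 by rw [show (4:ℝ) = 2^2 by norm_num, Real.sqrt_sq]; norm_num]
    exact Real.sqrt_le_sqrt hx
  have hsx0 : (0:ℝ) < Real.sqrt x := by linarith
  have hsxsq : Real.sqrt x * Real.sqrt x = x := Real.mul_self_sqrt hx0.le
  have hMx : (M:ℝ) ≤ Real.sqrt x := by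
    rw [show Real.sqrt x = Real.sqrt x by rfl]
    nlinarith [Real.sq_sqrt hx0.le, Real.sqrt_nonneg x,
      Real.sqrt_le_sqrt (le_trans hMMK hKx)]
  have hMlow : Real.sqrt x - 1 < M := by
    have h1 : K < (M + 1) ^ 2 := Nat.lt_succ_sqrt' K
    have h2 : x < ((M:ℝ) + 1) ^ 2 := by
      have : x < (K:ℝ) + 1 := Nat.lt_floor_add_one x
      have h3 : (K:ℝ) + 1 ≤ (((M + 1) ^ 2 : ℕ) : ℝ) := by exact_mod_cast h1
      push_cast at h3
      linarith
    nlinarith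
  have hMhalf : Real.sqrt x / 2 ≤ (M:ℝ) := by linarith
  have hxM : x / M ≤ 2 * Real.sqrt x := by
    rw [div_le_iff₀ hM0]
    nlinarith
  -- T1
  have hT1 : |(∑ n ∈ Finset.Icc 1 M, ((K / n : ℕ) : ℝ)) - x * (harmonic M : ℝ)| ≤ M := by
    have hH : x * (harmonic M : ℝ) = ∑ n ∈ Finset.Icc 1 M, x / n := by
      rw [harmonic_eq_sum_Icc]
      push_cast
      rw [Finset.mul_sum]
      exact Finset.sum_congr rfl fun n _ => by rw [div_eq_mul_inv]
    rw [hH, ← Finset.sum_sub_distrib]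
    calc |∑ n ∈ Finset.Icc 1 M, (((K / n : ℕ) : ℝ) - x / n)|
        ≤ ∑ n ∈ Finset.Icc 1 M, |((K / n : ℕ) : ℝ) - x / n| := Finset.abs_sum_le_sum_abs _ _
      _ ≤ ∑ n ∈ Finset.Icc 1 M, 1 := by
          apply Finset.sum_le_sum
          intro n hn
          rw [Finset.mem_Icc] at hn
          have hn0 : (0:ℝ) < n := by exact_mod_cast hn.1
          have hfl : (K / n : ℕ) = ⌊x / n⌋₊ := (Nat.floor_div_natCast x n).symm
          rw [hfl, abs_le]
          have hup : (⌊x / n⌋₊ : ℝ) ≤ x / n := Nat.floor_le (by positivity)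
          have hlo : x / n < ⌊x / n⌋₊ + 1 := Nat.lt_floor_add_one _
          constructor <;> linarith
      _ = M := by simp
  -- T2
  have hT2 : |x * (harmonic M : ℝ) - x * Real.log M - x * Real.eulerMascheroniConstant|
      ≤ 2 * Real.sqrt x := by
    have h := harmonic_est M (by omega)
    have heq : x * (harmonic M : ℝ) - x * Real.log M - x * Real.eulerMascheroniConstant
        = x * ((harmonic M : ℝ) - Real.log M - Real.eulerMascheroniConstant) := by ring
    calc |x * (harmonic M : ℝ) - x * Real.log M - x * Real.eulerMascheroniConstant|
        = x * |(harmonic M : ℝ) - Real.log M - Real.eulerMascheroniConstant| := by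
          rw [heq, abs_mul, abs_of_pos hx0]
      _ ≤ x * (1 / M) := by
          apply mul_le_mul_of_nonneg_left h hx0.le
      _ = x / M := by ring
      _ ≤ 2 * Real.sqrt x := hxM
  -- T3
  have hT3 : |x * Real.log M - x * (Real.log x / 2)| ≤ 2 * Real.sqrt x := by
    have hls : Real.log x / 2 = Real.log (Real.sqrt x) := (Real.log_sqrt hx0.le).symm
    have hmono : Real.log M ≤ Real.log (Real.sqrt x) := Real.log_le_log hM0 hMx
    have hdiff : Real.log (Real.sqrt x) - Real.log M ≤ 1 / M := by
      rw [← Real.log_div hsx0.ne' hM0.ne']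
      have := Real.log_le_sub_one_of_pos (show (0:ℝ) < Real.sqrt x / M by positivity)
      have h2 : Real.sqrt x / M - 1 ≤ 1 / M := by
        rw [div_sub' hM0.ne', div_le_div_iff₀ hM0 hM0]
        nlinarith
      linarith
    rw [hls, abs_sub_comm, ← mul_sub, abs_mul, abs_of_pos hx0,
      abs_of_nonneg (by linarith)]
    calc x * (Real.log (Real.sqrt x) - Real.log M) ≤ x * (1 / M) :=
          mul_le_mul_of_nonneg_left hdiff hx0.le
      _ = x / M := by ring
      _ ≤ 2 * Real.sqrt x := hxM
  -- T4
  have hT4 : |(M:ℝ) * M - x| ≤ 2 * Real.sqrt x := by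
    rw [abs_le]
    constructor
    · nlinarith
    · nlinarith
  -- combine
  have key : 2 * (∑ n ∈ Finset.Icc 1 M, ((K / n : ℕ) : ℝ)) - ((M:ℝ) * M)
      - (x * Real.log x + (2 * Real.eulerMascheroniConstant - 1) * x)
      = 2 * ((∑ n ∈ Finset.Icc 1 M, ((K / n : ℕ) : ℝ)) - x * (harmonic M : ℝ))
        + 2 * (x * (harmonic M : ℝ) - x * Real.log M - x * Real.eulerMascheroniConstant)
        + 2 * (x * Real.log M - x * (Real.log x / 2))
        + (x - (M:ℝ) * M) := by ring
  rw [key]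
  rw [abs_le] at hT1 hT2 hT3 hT4 ⊢
  constructor <;> linarith

/-- Non-standard Weyl asymptotics for the eigenvalue counting function
`N(λ) = #{(n,m) : (nm)² ≤ λ} = (√λ/2) ln λ + (2γ-1)√λ + O(λ^{1/4})` as `λ → ∞`. -/
theorem weyl_asymptotics :
    (fun lam : ℝ =>
        ((Set.ncard {p : ℕ × ℕ | 0 < p.1 ∧ 0 < p.2 ∧ (((p.1 * p.2 : ℕ) : ℝ)) ^ 2 ≤ lam} : ℝ))
          - (Real.sqrt lam / 2 * Real.log lam
              + (2 * Real.eulerMascheroniConstant - 1) * Real.sqrt lam))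
      =O[atTop] fun lam : ℝ => lam ^ ((1 : ℝ) / 4) := by
  rw [isBigO_iff]
  refine ⟨12, ?_⟩
  filter_upwards [eventually_ge_atTop (16:ℝ)] with lam hlam
  have hlam0 : (0:ℝ) < lam := by linarith
  set x := Real.sqrt lam with hxdef
  have hx4 : (4:ℝ) ≤ x := by
    rw [hxdef, show (4:ℝ) = Real.sqrt 16 by
      rw [show (16:ℝ) = 4^2 by norm_num, Real.sqrt_sq]; norm_num]
    exact Real.sqrt_le_sqrt hlam
  have hx0 : (0:ℝ) < x := by linarith
  set K := ⌊x⌋₊ with hKdef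
  set M := Nat.sqrt K with hMdef
  -- set = finset
  have hset : {p : ℕ × ℕ | 0 < p.1 ∧ 0 < p.2 ∧ (((p.1 * p.2 : ℕ) : ℝ)) ^ 2 ≤ lam}
      = ↑((Finset.Icc 1 K ×ˢ Finset.Icc 1 K).filter (fun p => p.1 * p.2 ≤ K)) := by
    ext p
    simp only [Set.mem_setOf_eq, Finset.coe_filter, Finset.mem_product, Finset.mem_Icc,
      Set.mem_setOf_eq]
    constructor
    · rintro ⟨h1, h2, h3⟩
      have hle : ((p.1 * p.2 : ℕ) : ℝ) ≤ x :=
        (Real.le_sqrt (by positivity) hlam0.le).mpr h3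
      have hK : p.1 * p.2 ≤ K := Nat.le_floor hle
      have hp1 : p.1 ≤ K := le_trans (Nat.le_mul_of_pos_right _ h2) hK
      have hp2 : p.2 ≤ K := le_trans (Nat.le_mul_of_pos_left _ h1) hK
      exact ⟨⟨⟨h1, hp1⟩, ⟨h2, hp2⟩⟩, hK⟩
    · rintro ⟨⟨⟨h1, _⟩, ⟨h2, _⟩⟩, hK⟩
      refine ⟨h1, h2, ?_⟩
      have : ((p.1 * p.2 : ℕ) : ℝ) ≤ x := le_trans (by exact_mod_cast hK) (Nat.floor_le hx0.le)
      nlinarith [Real.sq_sqrt hlam0.le]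
  rw [hset, Set.ncard_coe_finset]
  -- cast hyperbola
  have hcard : (((Finset.Icc 1 K ×ˢ Finset.Icc 1 K).filter
        (fun p => p.1 * p.2 ≤ K)).card : ℝ)
      = 2 * (∑ n ∈ Finset.Icc 1 M, ((K / n : ℕ) : ℝ)) - ((M:ℝ) * M) := by
    have := hyperbola K
    have hcast : (((((Finset.Icc 1 K ×ˢ Finset.Icc 1 K).filter
        (fun p => p.1 * p.2 ≤ K)).card + M * M : ℕ)) : ℝ)
        = ((2 * ∑ n ∈ Finset.Icc 1 M, K / n : ℕ) : ℝ) := by exact_mod_cast this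
    push_cast at hcast
    linarith
  rw [hcard]
  -- main term rewrite
  have hmain : Real.sqrt lam / 2 * Real.log lam
        + (2 * Real.eulerMascheroniConstant - 1) * Real.sqrt lam
      = x * Real.log x + (2 * Real.eulerMascheroniConstant - 1) * x := by
    rw [hxdef, Real.log_sqrt hlam0.le]
    ring
  rw [hmain]
  have hrhs : ‖lam ^ ((1:ℝ)/4)‖ = Real.sqrt x := by
    rw [hxdef, Real.sqrt_eq_rpow, Real.sqrt_eq_rpow, ← Real.rpow_mul hlam0.le]
    · rw [Real.norm_eq_abs, abs_of_nonneg (Real.rpow_nonneg hlam0.le _)]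
      norm_num
  rw [Real.norm_eq_abs, hrhs]
  exact main_est x hx4
end

section
/- The integral ∫_0^∞ [1/(e^t - 1) - e^{-t}/t] dt equals the Euler–Mascheroni constant γ. -/
open Real Set MeasureTheory Filter Topology

namespace EulerGammaAux

lemma one_sub_exp_pos {t : ℝ} (ht : 0 < t) : 0 < 1 - exp (-t) := by
  have : exp (-t) < 1 := by
    rw [exp_lt_one_iff]; linarith
  linarith

lemma exp_sub_one_pos {t : ℝ} (ht : 0 < t) : 0 < exp t - 1 := by
  have : (1 : ℝ) < exp t := by
    rw [← Real.exp_zero]; exact Real.exp_lt_exp.mpr ht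
  linarith

lemma one_sub_exp_le (t : ℝ) : 1 - exp (-t) ≤ t := by
  have := Real.add_one_le_exp (-t); linarith

lemma t_le_exp_sub_one {t : ℝ} (ht : 0 < t) : t ≤ exp t - 1 := by
  have := Real.add_one_le_exp t; linarith

lemma inv_exp_sub_one {t : ℝ} (ht : 0 < t) :
    1 / (exp t - 1) = exp (-t) / (1 - exp (-t)) := by
  rw [Real.exp_neg]
  have h1 : exp t ≠ 0 := (Real.exp_pos t).ne'
  have h2 : exp t - 1 ≠ 0 := (exp_sub_one_pos ht).ne'
  field_simp

lemma hasDerivAt_one_sub_exp (x : ℝ) :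
    HasDerivAt (fun t : ℝ => 1 - exp (-t)) (exp (-x)) x := by
  have h : HasDerivAt (fun t : ℝ => exp (-t)) (-exp (-x)) x := by
    exact ((Real.hasDerivAt_exp (-x)).comp x (hasDerivAt_neg x)).congr_deriv (by ring)
  simpa using h.const_sub 1

lemma hasDerivAt_log_one_sub_exp {x : ℝ} (hx : 0 < x) :
    HasDerivAt (fun t : ℝ => log (1 - exp (-t))) (1 / (exp x - 1)) x := by
  have h := (hasDerivAt_one_sub_exp x).log (one_sub_exp_pos hx).ne'
  rwa [← inv_exp_sub_one hx] at h

lemma tendsto_ratio :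
    Tendsto (fun t : ℝ => (1 - exp (-t)) / t) (𝓝[>] (0:ℝ)) (𝓝 1) := by
  have h : Tendsto (slope (fun t : ℝ => 1 - exp (-t)) 0) (𝓝[≠] (0:ℝ)) (𝓝 1) := by
    have := hasDerivAt_iff_tendsto_slope.mp (hasDerivAt_one_sub_exp 0)
    simpa using this
  have h2 : Tendsto (slope (fun t : ℝ => 1 - exp (-t)) 0) (𝓝[>] (0:ℝ)) (𝓝 1) :=
    h.mono_left (nhdsWithin_mono 0 fun x hx => ne_of_gt hx)
  refine h2.congr' ?_
  filter_upwards [self_mem_nhdsWithin] with x hx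
  rw [slope_def_field]
  simp

lemma tendsto_log_ratio :
    Tendsto (fun t : ℝ => log (1 - exp (-t)) - log t) (𝓝[>] (0:ℝ)) (𝓝 0) := by
  have h := (Real.continuousAt_log one_ne_zero).tendsto.comp tendsto_ratio
  rw [Real.log_one] at h
  refine h.congr' ?_
  filter_upwards [self_mem_nhdsWithin] with x hx
  have hx : (0:ℝ) < x := hx
  rw [Function.comp_apply, Real.log_div (one_sub_exp_pos hx).ne' hx.ne']

lemma tendsto_F0 :
    Tendsto (fun t : ℝ => (1 - exp (-t)) * log t) (𝓝[>] (0:ℝ)) (𝓝 0) := by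
  have h2 : Tendsto (fun t : ℝ => t * log t) (𝓝[>] (0:ℝ)) (𝓝 0) := by
    have := tendsto_log_mul_rpow_nhdsGT_zero (r := 1) one_pos
    refine this.congr' ?_
    filter_upwards [self_mem_nhdsWithin] with x _
    rw [Real.rpow_one, mul_comm]
  have h := tendsto_ratio.mul h2
  rw [one_mul] at h
  refine h.congr' ?_
  filter_upwards [self_mem_nhdsWithin] with x hx
  have hx : (0:ℝ) < x := hx
  field_simp

lemma tendsto_log_one_sub_exp_atTop :
    Tendsto (fun t : ℝ => log (1 - exp (-t))) atTop (𝓝 0) := by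
  have h1 : Tendsto (fun t : ℝ => exp (-t)) atTop (𝓝 0) :=
    Real.tendsto_exp_atBot.comp tendsto_neg_atTop_atBot
  have h2 : Tendsto (fun t : ℝ => 1 - exp (-t)) atTop (𝓝 1) := by
    simpa using (tendsto_const_nhds (x := (1:ℝ)) (f := atTop)).sub h1
  have := (Real.continuousAt_log one_ne_zero).tendsto.comp h2
  rw [Real.log_one] at this; exact this

lemma tendsto_neg_exp_log_atTop :
    Tendsto (fun t : ℝ => -(exp (-t) * log t)) atTop (𝓝 0) := by
  have hup : Tendsto (fun t : ℝ => t ^ 1 * exp (-t)) atTop (𝓝 0) :=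
    tendsto_pow_mul_exp_neg_atTop_nhds_zero 1
  have h : Tendsto (fun t : ℝ => exp (-t) * log t) atTop (𝓝 0) := by
    refine tendsto_of_tendsto_of_tendsto_of_le_of_le' tendsto_const_nhds hup ?_ ?_
    · filter_upwards [eventually_ge_atTop (1:ℝ)] with t ht
      have := Real.log_nonneg ht
      positivity
    · filter_upwards [eventually_ge_atTop (1:ℝ)] with t ht
      have h1 : log t ≤ t := by
        have := Real.log_le_sub_one_of_pos (by linarith : (0:ℝ) < t); linarith
      have h2 : (0:ℝ) ≤ exp (-t) := (Real.exp_pos _).le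
      calc exp (-t) * log t ≤ exp (-t) * t := by nlinarith
        _ = t ^ 1 * exp (-t) := by ring
  simpa using h.neg

/-- FTC on `Ioc 0 1` with a limit condition at the left endpoint. -/
lemma ftc_left {f f' : ℝ → ℝ} {m : ℝ}
    (hderiv : ∀ x ∈ Set.Ioc (0:ℝ) 1, HasDerivAt f (f' x) x)
    (hint : IntegrableOn f' (Set.Ioc (0:ℝ) 1))
    (hm : Tendsto f (𝓝[>] (0:ℝ)) (𝓝 m)) :
    ∫ x in Set.Ioc (0:ℝ) 1, f' x = f 1 - m := by
  set u : ℕ → ℝ := fun n => 1 / (n + 2) with hu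
  have hu0 : ∀ n, (0:ℝ) < u n := fun n => by positivity
  have hu1 : ∀ n, u n ≤ 1 := fun n => by
    rw [hu]
    rw [div_le_one (by positivity)]
    have : (0:ℝ) ≤ (n:ℝ) := n.cast_nonneg
    linarith
  have hulim : Tendsto u atTop (𝓝 0) := by
    have h1 : Tendsto (fun n : ℕ => ((n:ℝ) + 2)) atTop atTop :=
      tendsto_atTop_add_const_right _ 2 tendsto_natCast_atTop_atTop
    have := h1.inv_tendsto_atTop
    refine this.congr fun n => ?_
    simp [hu, Pi.inv_apply, one_div]
  have cover : AECover (volume.restrict (Set.Ioc (0:ℝ) 1)) atTop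
      (fun n => Set.Ioc (u n) 1) :=
    aecover_Ioc_of_Ioc hulim tendsto_const_nhds
  have T1 := cover.integral_tendsto_of_countably_generated hint
  have congr1 : ∀ n, (∫ x in Set.Ioc (u n) 1, f' x ∂(volume.restrict (Set.Ioc (0:ℝ) 1)))
      = f 1 - f (u n) := by
    intro n
    rw [Measure.restrict_restrict measurableSet_Ioc,
      Set.inter_eq_left.mpr (Set.Ioc_subset_Ioc_left (hu0 n).le)]
    have heq := intervalIntegral.integral_eq_sub_of_hasDerivAt (f := f) (f' := f')
      (a := u n) (b := 1) ?_ ?_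
    · rw [← intervalIntegral.integral_of_le (hu1 n), heq]
    · intro x hx
      rw [Set.uIcc_of_le (hu1 n)] at hx
      exact hderiv x ⟨(hu0 n).trans_le hx.1, hx.2⟩
    · rw [intervalIntegrable_iff_integrableOn_Ioc_of_le (hu1 n)]
      exact hint.mono_set (Set.Ioc_subset_Ioc_left (hu0 n).le)
  have T1' : Tendsto (fun n => f 1 - f (u n)) atTop
      (𝓝 (∫ x in Set.Ioc (0:ℝ) 1, f' x)) := by
    refine T1.congr fun n => ?_
    exact congr1 n
  have hun : Tendsto u atTop (𝓝[>] (0:ℝ)) := by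
    refine tendsto_nhdsWithin_of_tendsto_nhds_of_eventually_within _ hulim ?_
    filter_upwards with n using hu0 n
  have T2 : Tendsto (fun n => f 1 - f (u n)) atTop (𝓝 (f 1 - m)) :=
    tendsto_const_nhds.sub (hm.comp hun)
  exact tendsto_nhds_unique T1' T2

/-! ### Integrability lemmas -/

lemma integrableOn_log_Ioc : IntegrableOn Real.log (Set.Ioc (0:ℝ) 1) := by
  have hu0 : ∀ n : ℕ, (0:ℝ) < 1 / (n + 2) := fun n => by positivity
  have hu1 : ∀ n : ℕ, (1:ℝ) / (n + 2) ≤ 1 := fun n => by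
    rw [div_le_one (by positivity)]
    have : (0:ℝ) ≤ (n:ℝ) := n.cast_nonneg
    linarith
  have hnot : ∀ n : ℕ, (0:ℝ) ∉ Set.uIcc (1 / ((n:ℝ) + 2)) 1 := by
    intro n h
    rw [Set.uIcc_of_le (hu1 n)] at h
    exact absurd h.1 (not_le.mpr (hu0 n))
  refine integrableOn_Ioc_of_intervalIntegral_norm_bounded_left
    (l := atTop) (I := 1) (a := fun n : ℕ => 1 / (n + 2)) (b := 1) (fun n => ?_) ?_ ?_
  · rw [← intervalIntegrable_iff_integrableOn_Ioc_of_le (hu1 n)]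
    exact intervalIntegral.intervalIntegrable_log (hnot n)
  · have h1 : Tendsto (fun n : ℕ => ((n:ℝ) + 2)) atTop atTop :=
      tendsto_atTop_add_const_right _ 2 tendsto_natCast_atTop_atTop
    refine h1.inv_tendsto_atTop.congr fun n => ?_
    simp [Pi.inv_apply, one_div]
  · filter_upwards with n
    set e : ℝ := 1 / (n + 2) with he
    have h1 : ∫ x in Set.Ioc e 1, ‖Real.log x‖ = ∫ x in Set.Ioc e 1, -Real.log x := by
      refine setIntegral_congr_fun measurableSet_Ioc fun x hx => ?_
      rw [Real.norm_eq_abs, abs_of_nonpos (Real.log_nonpos ((hu0 n).le.trans hx.1.le) hx.2)]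
    have h2 : ∫ x in Set.Ioc e 1, Real.log x = ∫ x in e..1, Real.log x := by
      rw [intervalIntegral.integral_of_le (hu1 n)]
    rw [h1, integral_neg, h2, integral_log]
    have h3 : e * Real.log e ≤ 0 :=
      mul_nonpos_of_nonneg_of_nonpos (hu0 n).le (Real.log_nonpos (hu0 n).le (hu1 n))
    have h4 : (0:ℝ) < e := hu0 n
    simp only [Real.log_one]
    nlinarith

lemma intExpLog01 : IntegrableOn (fun t : ℝ => exp (-t) * Real.log t) (Set.Ioc (0:ℝ) 1) := by
  refine Integrable.mono integrableOn_log_Ioc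
    (((Real.measurable_exp.comp measurable_neg).mul Real.measurable_log).aestronglyMeasurable) ?_
  filter_upwards [ae_restrict_mem measurableSet_Ioc] with t ht
  have h1 : exp (-t) ≤ 1 := Real.exp_le_one_iff.mpr (by linarith [ht.1])
  rw [Real.norm_eq_abs, Real.norm_eq_abs, abs_mul, abs_of_pos (Real.exp_pos _)]
  nlinarith [abs_nonneg (Real.log t), (Real.exp_pos (-t)).le]

lemma intRatio01 : IntegrableOn (fun t : ℝ => (1 - exp (-t)) / t) (Set.Ioc (0:ℝ) 1) := by
  refine Integrable.mono' (integrable_const 1)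
    (((measurable_const.sub (Real.measurable_exp.comp measurable_neg)).div
      measurable_id).aestronglyMeasurable) ?_
  filter_upwards [ae_restrict_mem measurableSet_Ioc] with t ht
  have ht0 : (0:ℝ) < t := ht.1
  have h1 : 0 ≤ (1 - exp (-t)) / t :=
    div_nonneg (one_sub_exp_pos ht0).le ht0.le
  have h2 : (1 - exp (-t)) / t ≤ 1 := by
    rw [div_le_one ht0]; exact one_sub_exp_le t
  rw [Real.norm_eq_abs, abs_of_nonneg h1]; exact h2

lemma intDiff01 :
    IntegrableOn (fun t : ℝ => 1 / (exp t - 1) - 1 / t) (Set.Ioc (0:ℝ) 1) := by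
  refine Integrable.mono' (integrable_const 1)
    (((measurable_const.div (Real.measurable_exp.sub measurable_const)).sub
      (measurable_const.div measurable_id)).aestronglyMeasurable) ?_
  filter_upwards [ae_restrict_mem measurableSet_Ioc] with t ht
  have ht0 : (0:ℝ) < t := ht.1
  have hA : (0:ℝ) < exp t - 1 := exp_sub_one_pos ht0
  have hle : t ≤ exp t - 1 := t_le_exp_sub_one ht0
  have h1 : 1 / (exp t - 1) - 1 / t ≤ 0 := by
    have := one_div_le_one_div_of_le ht0 hle
    linarith
  have h2 : -1 ≤ 1 / (exp t - 1) - 1 / t := by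
    have key : exp t - 1 ≤ t * exp t := by
      have h3 := one_sub_exp_le t
      have h4 : exp t * (1 - exp (-t)) ≤ exp t * t :=
        mul_le_mul_of_nonneg_left h3 (Real.exp_pos t).le
      have h5 : exp t * exp (-t) = 1 := by
        rw [← Real.exp_add]; simp
      nlinarith
    have h6 : 1 / t - 1 / (exp t - 1) ≤ 1 := by
      rw [div_sub_div _ _ ht0.ne' hA.ne', div_le_one (by positivity)]
      have : t * exp t = t * (exp t - 1) + t := by ring
      nlinarith
    linarith
  rw [Real.norm_eq_abs]
  rw [abs_le]
  exact ⟨h2, by linarith⟩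

lemma intExpLogIoi : IntegrableOn (fun t : ℝ => exp (-t) * Real.log t) (Set.Ioi (1:ℝ)) := by
  refine Integrable.mono' (exp_neg_integrableOn_Ioi 1 (by norm_num : (0:ℝ) < 1/2))
    (((Real.measurable_exp.comp measurable_neg).mul Real.measurable_log).aestronglyMeasurable) ?_
  filter_upwards [ae_restrict_mem measurableSet_Ioi] with t ht
  have ht1 : (1:ℝ) < t := ht
  have ht0 : (0:ℝ) < t := by linarith
  have hlog : 0 ≤ Real.log t := Real.log_nonneg ht1.le
  have h1 : Real.log t ≤ t := by
    have := Real.log_le_sub_one_of_pos ht0; linarith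
  have h2 : t ≤ exp (t / 2) := by
    have ha : t / 2 ≤ exp (t / 2 - 1) := by
      have := Real.add_one_le_exp (t / 2 - 1); linarith
    have hb : exp (t / 2 - 1) = exp (t / 2) / exp 1 := by
      rw [Real.exp_sub]
    have hc : (2:ℝ) ≤ exp 1 := by
      have := Real.add_one_le_exp (1:ℝ); linarith
    have hd : exp (t / 2) / exp 1 ≤ exp (t / 2) / 2 :=
      div_le_div_of_nonneg_left (Real.exp_pos _).le two_pos hc
    nlinarith [Real.exp_pos (t / 2)]
  rw [Real.norm_eq_abs, abs_mul, abs_of_pos (Real.exp_pos _), abs_of_nonneg hlog]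
  calc exp (-t) * Real.log t ≤ exp (-t) * exp (t / 2) := by
        nlinarith [(Real.exp_pos (-t)).le]
    _ = exp (-(1/2) * t) := by rw [← Real.exp_add]; congr 1; ring

lemma intExpDivIoi : IntegrableOn (fun t : ℝ => exp (-t) / t) (Set.Ioi (1:ℝ)) := by
  refine Integrable.mono' (exp_neg_integrableOn_Ioi 1 (by norm_num : (0:ℝ) < 1))
    (((Real.measurable_exp.comp measurable_neg).div measurable_id).aestronglyMeasurable) ?_
  filter_upwards [ae_restrict_mem measurableSet_Ioi] with t ht
  have ht1 : (1:ℝ) < t := ht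
  have h1 : 0 ≤ exp (-t) / t := div_nonneg (Real.exp_pos _).le (by linarith)
  rw [Real.norm_eq_abs, abs_of_nonneg h1, neg_one_mul]
  exact (div_le_self (Real.exp_pos _).le ht1.le)

lemma derivIoi : ∀ x ∈ Set.Ici (1:ℝ),
    HasDerivAt (fun t : ℝ => log (1 - exp (-t))) (1 / (exp x - 1)) x :=
  fun x hx => hasDerivAt_log_one_sub_exp (lt_of_lt_of_le one_pos hx)

lemma derivPosIoi : ∀ x ∈ Set.Ioi (1:ℝ), 0 ≤ 1 / (exp x - 1) := fun x hx =>
  le_of_lt (div_pos one_pos (exp_sub_one_pos (lt_trans one_pos hx)))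

lemma eqA : ∫ x in Set.Ioi (1:ℝ), 1 / (exp x - 1) = -log (1 - exp (-1)) := by
  have h := integral_Ioi_of_hasDerivAt_of_nonneg' derivIoi derivPosIoi
    tendsto_log_one_sub_exp_atTop
  rw [h, zero_sub]

lemma intInvIoi : IntegrableOn (fun t : ℝ => 1 / (exp t - 1)) (Set.Ioi (1:ℝ)) :=
  integrableOn_Ioi_deriv_of_nonneg' derivIoi derivPosIoi tendsto_log_one_sub_exp_atTop

lemma eqB : ∫ x in Set.Ioi (1:ℝ), (exp (-x) * Real.log x - exp (-x) / x) = 0 := by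
  have hderiv : ∀ x ∈ Set.Ici (1:ℝ),
      HasDerivAt (fun t : ℝ => -(exp (-t) * Real.log t))
        (exp (-x) * Real.log x - exp (-x) / x) x := by
    intro x hx
    have hx0 : (0:ℝ) < x := lt_of_lt_of_le one_pos hx
    have hexp : HasDerivAt (fun t : ℝ => exp (-t)) (-exp (-x)) x := by
      exact ((Real.hasDerivAt_exp (-x)).comp x (hasDerivAt_neg x)).congr_deriv (by ring)
    have h := (hexp.mul (Real.hasDerivAt_log hx0.ne')).neg
    refine h.congr_deriv ?_
    ring
  have h := integral_Ioi_of_hasDerivAt_of_tendsto' hderiv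
    (intExpLogIoi.sub intExpDivIoi) tendsto_neg_exp_log_atTop
  rw [h]
  simp

lemma eqC : ∫ x in Set.Ioc (0:ℝ) 1, (1 / (exp x - 1) - 1 / x) = log (1 - exp (-1)) := by
  have hderiv : ∀ x ∈ Set.Ioc (0:ℝ) 1,
      HasDerivAt (fun t : ℝ => log (1 - exp (-t)) - log t)
        (1 / (exp x - 1) - 1 / x) x := by
    intro x hx
    have hx0 : (0:ℝ) < x := hx.1
    have h := (hasDerivAt_log_one_sub_exp hx0).sub (Real.hasDerivAt_log hx0.ne')
    exact h.congr_deriv (by ring)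
  have h := ftc_left hderiv intDiff01 tendsto_log_ratio
  rw [h, Real.log_one]
  ring

lemma eqD : ∫ x in Set.Ioc (0:ℝ) 1,
    (exp (-x) * Real.log x + (1 - exp (-x)) / x) = 0 := by
  have hderiv : ∀ x ∈ Set.Ioc (0:ℝ) 1,
      HasDerivAt (fun t : ℝ => (1 - exp (-t)) * Real.log t)
        (exp (-x) * Real.log x + (1 - exp (-x)) / x) x := by
    intro x hx
    have hx0 : (0:ℝ) < x := hx.1
    have h := (hasDerivAt_one_sub_exp x).mul (Real.hasDerivAt_log hx0.ne')
    refine h.congr_deriv ?_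
    ring
  have h := ftc_left hderiv (intExpLog01.add intRatio01) tendsto_F0
  rw [h, Real.log_one]
  ring

lemma keyA : ∫ t in Set.Ioi (0:ℝ), exp (-t) * Real.log t
    = -Real.eulerMascheroniConstant := by
  have h1 := Complex.hasDerivAt_GammaIntegral (s := 1) (by simp)
  have hev : Complex.Gamma =ᶠ[𝓝 (1:ℂ)] Complex.GammaIntegral := by
    have hopen : IsOpen {s : ℂ | 0 < s.re} := isOpen_lt continuous_const Complex.continuous_re
    filter_upwards [hopen.mem_nhds (by norm_num : (0:ℝ) < (1:ℂ).re)] with s hs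
    exact Complex.Gamma_eq_integral hs
  have h2 := h1.congr_of_eventuallyEq hev
  have h3 := h2.unique Complex.hasDerivAt_Gamma_one
  have h4 : (∫ t : ℝ in Set.Ioi 0, (t:ℂ) ^ ((1:ℂ) - 1) * (Real.log t * Real.exp (-t)))
      = ∫ t : ℝ in Set.Ioi 0, ((Real.exp (-t) * Real.log t : ℝ) : ℂ) := by
    refine setIntegral_congr_fun measurableSet_Ioi fun t ht => ?_
    rw [sub_self, Complex.cpow_zero, one_mul]
    push_cast
    ring
  rw [h4] at h3
  have h6 : ((∫ t in Set.Ioi (0:ℝ), Real.exp (-t) * Real.log t : ℝ) : ℂ)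
      = -(Real.eulerMascheroniConstant : ℂ) := integral_ofReal.symm.trans h3
  exact_mod_cast h6

lemma split_integral {f : ℝ → ℝ} (h1 : IntegrableOn f (Set.Ioc (0:ℝ) 1))
    (h2 : IntegrableOn f (Set.Ioi (1:ℝ))) :
    ∫ t in Set.Ioi (0:ℝ), f t
      = (∫ t in Set.Ioc (0:ℝ) 1, f t) + ∫ t in Set.Ioi (1:ℝ), f t := by
  have hu : Set.Ioc (0:ℝ) 1 ∪ Set.Ioi 1 = Set.Ioi 0 :=
    Set.Ioc_union_Ioi_eq_Ioi (by norm_num)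
  rw [← hu]
  exact setIntegral_union (Set.Ioc_disjoint_Ioi le_rfl) measurableSet_Ioi h1 h2

end EulerGammaAux

open EulerGammaAux

/-- `∫₀^∞ [1/(eᵗ - 1) - e^{-t}/t] dt = γ`, the Euler–Mascheroni constant. -/
theorem integral_eq_eulerMascheroni :
    ∫ t in Set.Ioi (0 : ℝ), (1 / (Real.exp t - 1) - Real.exp (-t) / t)
      = Real.eulerMascheroniConstant := by
  have heq01 : Set.EqOn (fun t : ℝ => 1 / (Real.exp t - 1) - Real.exp (-t) / t)
      (fun t : ℝ => (1 / (Real.exp t - 1) - 1 / t) + (1 - Real.exp (-t)) / t)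
      (Set.Ioc (0:ℝ) 1) := by
    intro t ht
    have ht0 : t ≠ 0 := ne_of_gt ht.1
    field_simp
    ring
  -- integrability of the target integrand on both pieces
  have hint01 : IntegrableOn
      (fun t : ℝ => 1 / (Real.exp t - 1) - Real.exp (-t) / t) (Set.Ioc (0:ℝ) 1) :=
    MeasureTheory.IntegrableOn.congr_fun (intDiff01.add intRatio01)
      (fun t ht => by simpa using (heq01 ht).symm) measurableSet_Ioc
  have hintIoi : IntegrableOn
      (fun t : ℝ => 1 / (Real.exp t - 1) - Real.exp (-t) / t) (Set.Ioi (1:ℝ)) :=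
    intInvIoi.sub intExpDivIoi
  -- the two named sub-integrals
  set J := ∫ x in Set.Ioc (0:ℝ) 1, (1 - Real.exp (-x)) / x with hJ
  set K := ∫ x in Set.Ioi (1:ℝ), Real.exp (-x) / x with hK
  -- values of the pieces of the target integral
  have hT01 : ∫ t in Set.Ioc (0:ℝ) 1, (1 / (Real.exp t - 1) - Real.exp (-t) / t)
      = Real.log (1 - Real.exp (-1)) + J := by
    rw [setIntegral_congr_fun measurableSet_Ioc heq01,
      integral_add intDiff01 intRatio01, eqC]
  have hTIoi : ∫ t in Set.Ioi (1:ℝ), (1 / (Real.exp t - 1) - Real.exp (-t) / t)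
      = -Real.log (1 - Real.exp (-1)) - K := by
    rw [integral_sub intInvIoi intExpDivIoi, eqA]
  have hT : ∫ t in Set.Ioi (0 : ℝ), (1 / (Real.exp t - 1) - Real.exp (-t) / t)
      = J - K := by
    rw [split_integral hint01 hintIoi, hT01, hTIoi]
    ring
  -- the Gamma-side computation
  have hL01 : ∫ t in Set.Ioc (0:ℝ) 1, Real.exp (-t) * Real.log t = -J := by
    have h := eqD
    rw [integral_add intExpLog01 intRatio01] at h
    linarith
  have hLIoi : ∫ t in Set.Ioi (1:ℝ), Real.exp (-t) * Real.log t = K := by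
    have h := eqB
    rw [integral_sub intExpLogIoi intExpDivIoi] at h
    linarith
  have hGamma : -Real.eulerMascheroniConstant = -J + K := by
    rw [← keyA, split_integral intExpLog01 intExpLogIoi, hL01, hLIoi]
  rw [hT]
  linarith
end

section
/- The regularized trace of the resolvent τ(k) := ∑_{n=1}^∞ d(n) [1/(n+k) - 1/n] converges absolutely for all real k not in -ℕ, and satisfies τ(k) = -∑_{n=1}^∞ (1/n)[ψ(1 + k/n) + γ], where ψ is the digamma function. -/
open Real Filter Topology Finset

local notation "γ" => Real.eulerMascheroniConstant

/-- The digamma function `ψ = Γ'/Γ`. -/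
noncomputable def digamma (x : ℝ) : ℝ := deriv Real.Gamma x / Real.Gamma x

lemma summable_aux (a b : ℝ) : Summable (fun m : ℕ => 1/(a + m) - 1/(b + m)) := by
  have hg : Summable (fun m : ℕ => 1 / (m : ℝ) ^ 2) :=
    Real.summable_one_div_nat_pow.mpr one_lt_two
  refine summable_of_isBigO_nat hg (Asymptotics.isBigO_iff.mpr ⟨4 * |b - a|, ?_⟩)
  filter_upwards [eventually_ge_atTop (⌈2 * (|a| + |b|) + 1⌉₊)] with m hm
  have hx : 2 * (|a| + |b|) + 1 ≤ (m : ℝ) := by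
    calc 2 * (|a| + |b|) + 1 ≤ (⌈2 * (|a| + |b|) + 1⌉₊ : ℝ) := Nat.le_ceil _
    _ ≤ (m : ℝ) := Nat.cast_le.mpr hm
  have ha0 : |a| ≤ (m : ℝ) / 2 := by have := abs_nonneg b; linarith
  have hb0 : |b| ≤ (m : ℝ) / 2 := by have := abs_nonneg a; linarith
  have hm0 : (0 : ℝ) < m := by have := abs_nonneg a; have := abs_nonneg b; linarith
  have ha : (m : ℝ) / 2 ≤ a + m := by have := neg_abs_le a; linarith
  have hb : (m : ℝ) / 2 ≤ b + m := by have := neg_abs_le b; linarith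
  have ha' : (0 : ℝ) < a + m := by linarith
  have hb' : (0 : ℝ) < b + m := by linarith
  have key : 1/(a + m) - 1/(b + m) = (b - a) / ((a + m) * (b + m)) := by
    field_simp
    ring
  rw [key, Real.norm_eq_abs, abs_div, abs_of_pos (by positivity : (0:ℝ) < (a + m) * (b + m))]
  have h2 : ‖1 / (m : ℝ) ^ 2‖ = 1 / (m : ℝ) ^ 2 := by
    rw [Real.norm_eq_abs, abs_of_pos (by positivity)]
  rw [h2, div_le_iff₀ (by positivity)]
  have h3 : (m:ℝ)/2 * ((m:ℝ)/2) ≤ (a + m) * (b + m) := by nlinarith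
  calc |b - a| = 4 * |b - a| * (1 / (m:ℝ)^2) * ((m:ℝ)/2 * ((m:ℝ)/2)) := by
        field_simp; ring
  _ ≤ 4 * |b - a| * (1 / (m:ℝ)^2) * ((a + m) * (b + m)) :=
        mul_le_mul_of_nonneg_left h3 (by positivity)

lemma hasSum_telescope_aux (c : ℝ) :
    HasSum (fun m : ℕ => 1/(c + m) - 1/(c + m + 1)) (1/c) := by
  have hs : Summable (fun m : ℕ => 1/(c + m) - 1/(c + m + 1)) := by
    have := summable_aux c (c + 1)
    refine this.congr fun m => ?_
    congr 1
    ring_nf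
  rw [hs.hasSum_iff_tendsto_nat]
  have hps : ∀ n : ℕ, ∑ i ∈ Finset.range n, (1/(c + i) - 1/(c + i + 1))
      = 1/c - 1/(c + n) := by
    intro n
    have h := Finset.sum_range_sub' (f := fun i : ℕ => 1/(c + i)) n
    simp only [Nat.cast_zero, add_zero, Nat.cast_add, Nat.cast_one] at h
    rw [← h]
    exact Finset.sum_congr rfl fun i _ => by ring_nf
  simp only [hps]
  have : Tendsto (fun n : ℕ => 1/(c + n)) atTop (𝓝 0) := by
    have := Filter.Tendsto.add_atTop (tendsto_const_nhds (x := c))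
      (tendsto_natCast_atTop_atTop (R := ℝ))
    have h := this.inv_tendsto_atTop; simp only [one_div]; exact h
  simpa using (tendsto_const_nhds (x := 1/c)).sub this

lemma digamma_rec (x : ℝ) (hx : ∀ m : ℕ, x ≠ -(m : ℝ)) :
    digamma (x + 1) = digamma x + 1/x := by
  have hx0 : x ≠ 0 := by simpa using hx 0
  have hd : DifferentiableAt ℝ Real.Gamma x := Real.differentiableAt_Gamma hx
  have h1 : HasDerivAt (fun y => y * Real.Gamma y)
      (1 * Real.Gamma x + x * deriv Real.Gamma x) x :=
    (hasDerivAt_id x).mul hd.hasDerivAt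
  have hx1 : ∀ m : ℕ, x + 1 ≠ -(m : ℝ) := by
    intro m h
    have := hx (m + 1)
    push_cast at this
    apply this; linarith
  have hd1 : DifferentiableAt ℝ Real.Gamma (x + 1) := Real.differentiableAt_Gamma hx1
  have h2 : HasDerivAt (fun y => Real.Gamma (y + 1)) (deriv Real.Gamma (x + 1)) x := by
    simpa [Function.comp_def] using (hd1.hasDerivAt.comp x ((hasDerivAt_id x).add_const 1))
  have heq : (fun y => y * Real.Gamma y) =ᶠ[𝓝 x] (fun y => Real.Gamma (y + 1)) := by
    filter_upwards [eventually_ne_nhds hx0] with y hy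
    rw [Real.Gamma_add_one hy]
  have h3 : HasDerivAt (fun y => y * Real.Gamma y) (deriv Real.Gamma (x + 1)) x :=
    h2.congr_of_eventuallyEq heq
  have hval : deriv Real.Gamma (x + 1) = Real.Gamma x + x * deriv Real.Gamma x := by
    have := h3.unique h1
    rw [this]; ring
  have hg : Real.Gamma x ≠ 0 := Real.Gamma_ne_zero hx
  unfold digamma
  rw [hval, Real.Gamma_add_one hx0]
  field_simp
  ring

lemma digamma_one : digamma 1 = -γ := by
  unfold digamma
  rw [Real.hasDerivAt_Gamma_one.deriv, Real.Gamma_one, div_one]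

lemma digamma_mono {u v : ℝ} (hu : 0 < u) (huv : u ≤ v) : digamma u ≤ digamma v := by
  rcases eq_or_lt_of_le huv with rfl | hlt
  · exact le_rfl
  have hv : 0 < v := lt_trans hu hlt
  have hc : ConvexOn ℝ (Set.Ioi 0) (Real.log ∘ Real.Gamma) := Real.convexOn_log_Gamma
  have hder : ∀ {x : ℝ}, 0 < x → DifferentiableAt ℝ (Real.log ∘ Real.Gamma) x := by
    intro x hx
    exact (Real.differentiableAt_Gamma (fun m => by
      have : (0:ℝ) ≤ m := Nat.cast_nonneg m
      intro h; rw [h] at hx; linarith)).log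
      (Real.Gamma_pos_of_pos hx).ne'
  have hdig : ∀ {x : ℝ}, 0 < x → deriv (Real.log ∘ Real.Gamma) x = digamma x := by
    intro x hx
    rw [Function.comp_def, deriv.log (Real.differentiableAt_Gamma (fun m => by
      have : (0:ℝ) ≤ m := Nat.cast_nonneg m
      intro h; rw [h] at hx; linarith)) (Real.Gamma_pos_of_pos hx).ne']
    rfl
  rw [← hdig hu, ← hdig hv]
  calc deriv (Real.log ∘ Real.Gamma) u
      ≤ slope (Real.log ∘ Real.Gamma) u v :=
        hc.deriv_le_slope (Set.mem_Ioi.mpr hu) (Set.mem_Ioi.mpr hv) hlt (hder hu)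
    _ ≤ deriv (Real.log ∘ Real.Gamma) v :=
        hc.slope_le_deriv (Set.mem_Ioi.mpr hu) (Set.mem_Ioi.mpr hv) hlt (hder hv)

noncomputable def hfun (y : ℝ) : ℝ := -γ + ∑' m : ℕ, (1/(1 + (m:ℝ)) - 1/(y + m))

lemma hfun_rec (y : ℝ) : hfun (y + 1) = hfun y + 1/y := by
  have h1 : HasSum (fun m : ℕ => 1/(1 + (m:ℝ)) - 1/(y + m)) (∑' m : ℕ, (1/(1 + (m:ℝ)) - 1/(y + m))) :=
    (summable_aux 1 y).hasSum
  have h2 := h1.add (hasSum_telescope_aux y)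
  have h3 : HasSum (fun m : ℕ => 1/(1 + (m:ℝ)) - 1/(y + 1 + m))
      ((∑' m : ℕ, (1/(1 + (m:ℝ)) - 1/(y + m))) + 1/y) := by
    refine h2.congr_fun fun m => ?_; ring_nf
  unfold hfun
  rw [h3.tsum_eq]; ring

lemma hfun_one : hfun 1 = -γ := by
  unfold hfun
  have : ∀ m : ℕ, (1/(1 + (m:ℝ)) - 1/(1 + m)) = 0 := fun m => by ring
  simp [this]

lemma hfun_mono {u v : ℝ} (hu : 0 < u) (huv : u ≤ v) : hfun u ≤ hfun v := by
  unfold hfun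
  have hv : 0 < v := lt_of_lt_of_le hu huv
  refine add_le_add_right ((summable_aux 1 u).tsum_le_tsum (fun m => ?_) (summable_aux 1 v)) _
  have hum : (0:ℝ) < u + m := by positivity
  have : 1/(v + m) ≤ 1/(u + m) := one_div_le_one_div_of_le hum (by linarith)
  linarith

lemma digamma_shift (y : ℝ) (hy : 0 < y) (n : ℕ) :
    digamma (y + n) = digamma y + ∑ j ∈ Finset.range n, 1/(y + j) := by
  induction n with
  | zero => simp
  | succ n ih =>
    have hpos : 0 < y + n := by positivity
    have hrec := digamma_rec (y + n) (fun m => by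
      have : (0:ℝ) ≤ m := Nat.cast_nonneg m
      intro h; rw [h] at hpos; linarith)
    push_cast
    rw [show y + ((n:ℝ) + 1) = (y + n) + 1 by ring, hrec, ih, Finset.sum_range_succ]
    ring

lemma hfun_shift (y : ℝ) (n : ℕ) :
    hfun (y + n) = hfun y + ∑ j ∈ Finset.range n, 1/(y + j) := by
  induction n with
  | zero => simp
  | succ n ih =>
    push_cast
    rw [show y + ((n:ℝ) + 1) = (y + n) + 1 by ring, hfun_rec, ih, Finset.sum_range_succ]
    ring

lemma digamma_eq_hfun {y : ℝ} (hy : 0 < y) : digamma y = hfun y := by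
  set c : ℕ := ⌈y⌉₊ with hc
  have hyc : y ≤ c := Nat.le_ceil y
  have key : ∀ m : ℕ, |digamma y - hfun y| ≤ (c : ℝ) / (1 + m) := by
    intro m
    set P : ℕ → ℝ := fun n => digamma (1 + n) with hP
    set Q : ℕ → ℝ := fun n => hfun (1 + n) with hQ
    have hPs : ∀ n : ℕ, P n = digamma 1 + ∑ j ∈ Finset.range n, 1/(1 + (j:ℝ)) := by
      intro n; simpa using digamma_shift 1 one_pos n
    have hQs : ∀ n : ℕ, Q n = hfun 1 + ∑ j ∈ Finset.range n, 1/(1 + (j:ℝ)) := by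
      intro n; simpa using hfun_shift 1 n
    have hPQ : ∀ n : ℕ, P n = Q n := by
      intro n; rw [hPs, hQs, digamma_one, hfun_one]
    have hsumbd : ∑ j ∈ Finset.range (m + c), 1/(1 + (j:ℝ))
        - ∑ j ∈ Finset.range m, 1/(1 + (j:ℝ)) ≤ (c : ℝ) / (1 + m) := by
      rw [← Finset.sum_Ico_eq_sub _ (Nat.le_add_right m c)]
      calc ∑ j ∈ Finset.Ico m (m + c), 1/(1 + (j:ℝ))
          ≤ ∑ _j ∈ Finset.Ico m (m + c), 1/(1 + (m:ℝ)) := by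
            refine Finset.sum_le_sum fun j hj => ?_
            have hjm : m ≤ j := (Finset.mem_Ico.mp hj).1
            exact one_div_le_one_div_of_le (by positivity) (by
              have : (m:ℝ) ≤ j := Nat.cast_le.mpr hjm
              linarith)
        _ = (c : ℝ) / (1 + m) := by
            rw [Finset.sum_const, Nat.card_Ico]
            simp [Nat.add_sub_cancel_left, div_eq_mul_inv, one_div, mul_comm]
    have hPdiff : P (m + c) - P m ≤ (c : ℝ) / (1 + m) := by
      rw [hPs, hPs]; simpa using hsumbd
    have hQdiff : Q (m + c) - Q m ≤ (c : ℝ) / (1 + m) := by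
      rw [hQs, hQs]; simpa using hsumbd
    have hD : digamma y - hfun y = digamma (y + ((m:ℝ) + 1)) - hfun (y + ((m:ℝ) + 1)) := by
      have h1 := digamma_shift y hy (m + 1)
      have h2 := hfun_shift y (m + 1)
      push_cast at h1 h2
      rw [h1, h2]; ring
    have hy1 : (0:ℝ) < 1 + m := by positivity
    have hub : digamma (y + (m + 1)) ≤ P (m + c) := by
      refine digamma_mono (by positivity) ?_
      push_cast; linarith
    have hlb : P m ≤ digamma (y + (m + 1)) := by
      refine digamma_mono (by positivity) ?_
      push_cast; linarith
    have hub' : hfun (y + (m + 1)) ≤ Q (m + c) := by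
      refine hfun_mono (by positivity) ?_
      push_cast; linarith
    have hlb' : Q m ≤ hfun (y + (m + 1)) := by
      refine hfun_mono (by positivity) ?_
      push_cast; linarith
    rw [hD, abs_le]
    constructor
    · have := hPQ m
      linarith
    · have := hPQ m
      linarith
  have htend : Tendsto (fun m : ℕ => (c : ℝ) / (1 + m)) atTop (𝓝 0) := by
    have := tendsto_one_div_add_atTop_nhds_zero_nat.const_mul (c : ℝ)
    simpa [div_eq_mul_inv, one_div, add_comm] using this
  have h0 : |digamma y - hfun y| ≤ 0 :=
    ge_of_tendsto htend (Eventually.of_forall key)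
  have := abs_nonneg (digamma y - hfun y)
  have : digamma y - hfun y = 0 := by
    rw [← abs_eq_zero]; linarith
  linarith

lemma digamma_hasSum_aux (N : ℕ) : ∀ x : ℝ, (∀ m : ℕ, x + 1 ≠ -(m:ℝ)) → -1 < x + N →
    HasSum (fun m : ℕ => 1/(1 + (m:ℝ)) - 1/(1 + x + m)) (digamma (1 + x) + γ) := by
  induction N with
  | zero =>
    intro x hx h0
    have hy : 0 < 1 + x := by
      simp only [Nat.cast_zero, add_zero] at h0
      linarith
    have hs : Summable (fun m : ℕ => 1/(1 + (m:ℝ)) - 1/(1 + x + m)) := summable_aux 1 (1 + x)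
    have heq : digamma (1 + x) + γ = ∑' m : ℕ, (1/(1 + (m:ℝ)) - 1/(1 + x + m)) := by
      rw [digamma_eq_hfun hy]; unfold hfun; ring
    rw [heq]
    exact hs.hasSum
  | succ N ih =>
    intro x hx hN
    have hx' : ∀ m : ℕ, (x + 1) + 1 ≠ -(m:ℝ) := by
      intro m h
      have := hx (m + 1)
      push_cast at this
      apply this; linarith
    have h1 : HasSum (fun m : ℕ => 1/(1 + (m:ℝ)) - 1/(1 + (x + 1) + m))
        (digamma (1 + (x + 1)) + γ) := by
      refine ih (x + 1) hx' ?_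
      push_cast at hN ⊢
      linarith
    have ht : HasSum (fun m : ℕ => 1/((x + 1) + m) - 1/((x + 1) + m + 1)) (1/(x + 1)) :=
      hasSum_telescope_aux (x + 1)
    have h2 := h1.sub ht
    have h3 : HasSum (fun m : ℕ => 1/(1 + (m:ℝ)) - 1/(1 + x + m))
        (digamma (1 + (x + 1)) + γ - 1/(x + 1)) := by
      refine h2.congr_fun fun m => ?_
      have hne : 1 + x + (m:ℝ) ≠ 0 := by
        have := hx m
        intro h; apply this; linarith
      have : (1:ℝ)/(1 + x + m) = 1/((x+1) + m) := by ring_nf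
      rw [show (1:ℝ)/(1 + (x+1) + (m:ℝ)) = 1/((x+1) + m + 1) by ring_nf, this]
      ring
    have hrec : digamma (1 + (x + 1)) = digamma (1 + x) + 1/(x + 1) := by
      have := digamma_rec (x + 1) (fun m => by
        intro h; exact hx m (by linarith))
      rw [show (1:ℝ) + (x + 1) = (x + 1) + 1 by ring, this]
      ring_nf
    rw [hrec] at h3
    convert h3 using 1; ring


lemma digamma_hasSum (x : ℝ) (hx : ∀ m : ℕ, x + 1 ≠ -(m:ℝ)) :
    HasSum (fun m : ℕ => 1/(1 + (m:ℝ)) - 1/(1 + x + m)) (digamma (1 + x) + γ) := by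
  refine digamma_hasSum_aux (⌈|x|⌉₊ + 1) x hx ?_
  have h := Nat.le_ceil |x|
  have h2 := neg_abs_le x
  push_cast
  linarith

lemma fiber_eq (n : ℕ) :
    (fun p : ℕ × ℕ => (p.1 + 1) * (p.2 + 1) - 1) ⁻¹' {n}
      = ((Nat.divisorsAntidiagonal (n + 1)).image (fun p => (p.1 - 1, p.2 - 1)) : Finset (ℕ × ℕ)) := by
  ext ⟨a, b⟩
  simp only [Set.mem_preimage, Set.mem_singleton_iff, Finset.coe_image, Set.mem_image,
    Finset.mem_coe, Nat.mem_divisorsAntidiagonal]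
  constructor
  · intro h
    have hpos : 0 < (a + 1) * (b + 1) := by positivity
    exact ⟨(a + 1, b + 1), ⟨show (a + 1) * (b + 1) = n + 1 by omega, by omega⟩, by simp⟩
  · rintro ⟨⟨c, d⟩, ⟨hcd, -⟩, h⟩
    simp only [Prod.mk.injEq] at h
    obtain ⟨h1, h2⟩ := h
    have hc0 : c ≠ 0 := by rintro rfl; simp at hcd
    have hd0 : d ≠ 0 := by rintro rfl; simp at hcd
    have e1 : a + 1 = c := by omega
    have e2 : b + 1 = d := by omega
    show (a + 1) * (b + 1) - 1 = n
    rw [e1, e2]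
    have hcd' : c * d = n + 1 := hcd
    omega

lemma fiber_card (n : ℕ) :
    ((Nat.divisorsAntidiagonal (n + 1)).image (fun p => (p.1 - 1, p.2 - 1))).card
      = (Nat.divisors (n + 1)).card := by
  rw [Finset.card_image_of_injOn]
  · rw [← Nat.image_fst_divisorsAntidiagonal (n := n + 1)]
    rw [Finset.card_image_of_injOn]
    intro ⟨c, d⟩ hc ⟨c', d'⟩ hc' h
    simp only [Finset.mem_coe, Nat.mem_divisorsAntidiagonal] at hc hc'
    simp only at h
    subst h
    have hc0 : c ≠ 0 := by rintro rfl; simp at hc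
    have : d = d' := Nat.eq_of_mul_eq_mul_left (Nat.pos_of_ne_zero hc0) (hc.1.trans hc'.1.symm)
    rw [this]
  · intro ⟨c, d⟩ hc ⟨c', d'⟩ hc' h
    simp only [Finset.mem_coe, Nat.mem_divisorsAntidiagonal] at hc hc'
    simp only [Prod.mk.injEq] at h
    obtain ⟨h1, h2⟩ := h
    have hc0 : c ≠ 0 := by rintro rfl; simp at hc
    have hd0 : d ≠ 0 := by rintro rfl; simp at hc
    have hc0' : c' ≠ 0 := by rintro rfl; simp at hc'
    have hd0' : d' ≠ 0 := by rintro rfl; simp at hc'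
    simp only [Prod.mk.injEq]
    omega

lemma fiber_tsum (u : ℕ × ℕ → ℝ) (v : ℕ → ℝ)
    (hu : ∀ p : ℕ × ℕ, u p = v ((p.1 + 1) * (p.2 + 1))) (n : ℕ) :
    ∑' x : (fun p : ℕ × ℕ => (p.1 + 1) * (p.2 + 1) - 1) ⁻¹' {n}, u x
      = ((Nat.divisors (n + 1)).card : ℝ) * v (n + 1) := by
  rw [fiber_eq n, Finset.tsum_subtype']
  have : ∀ p ∈ (Nat.divisorsAntidiagonal (n + 1)).image (fun p => (p.1 - 1, p.2 - 1)),
      u p = v (n + 1) := by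
    intro ⟨a, b⟩ hp
    simp only [Finset.mem_image, Nat.mem_divisorsAntidiagonal] at hp
    obtain ⟨⟨c, d⟩, ⟨hcd, -⟩, h⟩ := hp
    simp only [Prod.mk.injEq] at h
    obtain ⟨rfl, rfl⟩ := h
    have hc0 : c ≠ 0 := by rintro rfl; simp at hcd
    have hd0 : d ≠ 0 := by rintro rfl; simp at hcd
    rw [hu]
    congr 1
    show (c - 1 + 1) * (d - 1 + 1) = n + 1
    have e1 : c - 1 + 1 = c := by omega
    have e2 : d - 1 + 1 = d := by omega
    rw [e1, e2]
    exact hcd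
  rw [Finset.sum_congr rfl this, Finset.sum_const, fiber_card, nsmul_eq_mul]

noncomputable def Ffun (k : ℝ) (p : ℕ × ℕ) : ℝ :=
  1 / (((p.1 : ℝ) + 1) * ((p.2 : ℝ) + 1) + k) - 1 / (((p.1 : ℝ) + 1) * ((p.2 : ℝ) + 1))

lemma summable_absF (k : ℝ) :
    Summable (fun p => |Ffun k p|) := by
  classical
  set M : ℕ := ⌈2 * |k|⌉₊ + 1 with hM
  have hMk : 2 * |k| ≤ (M : ℝ) := by
    have := Nat.le_ceil (2 * |k|)
    rw [hM]
    push_cast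
    linarith
  set s : Finset (ℕ × ℕ) := Finset.range M ×ˢ Finset.range M with hs
  rw [← Finset.summable_compl_iff s]
  -- bound on the complement
  have hsum1 : Summable (fun a : ℕ => 1 / ((a : ℝ) + 1) ^ 2) := by
    have h0 : Summable (fun n : ℕ => 1 / (n : ℝ) ^ 2) :=
      Real.summable_one_div_nat_pow.mpr one_lt_two
    have := (summable_nat_add_iff 1).mpr h0
    refine this.congr fun a => ?_
    push_cast
    ring
  have hg : Summable (fun p : ℕ × ℕ => 2 * |k| * (1 / ((p.1 : ℝ) + 1) ^ 2 * (1 / ((p.2 : ℝ) + 1) ^ 2))) := by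
    exact (Summable.mul_of_nonneg hsum1 hsum1 (fun a => by positivity) (fun a => by positivity)).mul_left _
  refine Summable.of_nonneg_of_le (fun z => abs_nonneg _) (fun z => ?_)
    (hg.subtype ((↑s : Set (ℕ × ℕ))ᶜ))
  obtain ⟨⟨a, b⟩, hz⟩ := z
  simp only [Set.mem_compl_iff, Finset.coe_mem, Finset.mem_coe, hs, Finset.mem_product,
    Finset.mem_range, not_and_or, not_lt] at hz
  set A : ℝ := (a : ℝ) + 1 with hA
  set B : ℝ := (b : ℝ) + 1 with hB
  have hA1 : (1 : ℝ) ≤ A := by simp [hA]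
  have hB1 : (1 : ℝ) ≤ B := by simp [hB]
  have hN : 2 * |k| + 1 ≤ A * B := by
    rcases hz with h | h
    · have hA' : (M : ℝ) + 1 ≤ A := by
        simp only [hA]
        have : (M : ℝ) ≤ a := Nat.cast_le.mpr h
        linarith
      nlinarith
    · have hB' : (M : ℝ) + 1 ≤ B := by
        simp only [hB]
        have : (M : ℝ) ≤ b := Nat.cast_le.mpr h
        linarith
      nlinarith
  set N : ℝ := A * B with hNdef
  have hNpos : 0 < N := by positivity
  have habs : -|k| ≤ k := neg_abs_le k
  have habs' : k ≤ |k| := le_abs_self k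
  have hNk : 0 < N + k := by linarith
  have hNk2 : N / 2 ≤ N + k := by linarith
  have key : Ffun k (a, b) = -k / (N * (N + k)) := by
    simp only [Ffun, ← hA, ← hB, ← hNdef]
    field_simp
    ring
  show |Ffun k (a, b)| ≤ 2 * |k| * (1 / A ^ 2 * (1 / B ^ 2))
  rw [key, abs_div, abs_neg, abs_of_pos (by positivity : (0:ℝ) < N * (N + k))]
  have hRHS : 2 * |k| * (1 / A ^ 2 * (1 / B ^ 2)) = 2 * |k| / N ^ 2 := by
    rw [hNdef, mul_pow, div_mul_div_comm, one_mul, mul_one_div]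
  rw [hRHS, div_le_div_iff₀ (by positivity) (by positivity)]
  nlinarith [mul_nonneg (mul_nonneg (by positivity : (0:ℝ) ≤ 2 * |k|) hNpos.le)
    (by linarith : (0:ℝ) ≤ N + k - N / 2)]

/-- The regularized trace of the resolvent `τ(k) = ∑ d(n)[1/(n+k) - 1/n]` converges
absolutely for real `k ∉ -ℕ` and satisfies `τ(k) = -∑ (1/n)[ψ(1 + k/n) + γ]`. -/
theorem regularized_resolvent_trace (k : ℝ) (hk : ∀ m : ℕ, 1 ≤ m → k ≠ -(m : ℝ)) :
    Summable (fun n : ℕ =>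
        |((Nat.divisors (n + 1)).card : ℝ) * (1 / (((n : ℝ) + 1) + k) - 1 / ((n : ℝ) + 1))|) ∧
    ∑' n : ℕ, ((Nat.divisors (n + 1)).card : ℝ) * (1 / (((n : ℝ) + 1) + k) - 1 / ((n : ℝ) + 1))
      = -∑' n : ℕ, (1 / ((n : ℝ) + 1)) *
          (digamma (1 + k / ((n : ℝ) + 1)) + Real.eulerMascheroniConstant) := by
  have hFabs : Summable (fun p => |Ffun k p|) := summable_absF k
  have hF : Summable (Ffun k) := summable_abs_iff.mp hFabs
  -- fiberwise identification, absolute values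
  have habs : HasSum (fun n : ℕ =>
      |((Nat.divisors (n + 1)).card : ℝ) * (1 / (((n : ℝ) + 1) + k) - 1 / ((n : ℝ) + 1))|)
      (∑' p, |Ffun k p|) := by
    have h1 := hFabs.hasSum.tsum_fiberwise (fun p : ℕ × ℕ => (p.1 + 1) * (p.2 + 1) - 1)
    refine h1.congr_fun fun n => ?_
    have := fiber_tsum (fun p => |Ffun k p|)
      (fun N : ℕ => |1 / ((N : ℝ) + k) - 1 / (N : ℝ)|)
      (fun p => by simp only [Ffun]; push_cast; ring_nf) n
    rw [this, abs_mul, Nat.abs_cast]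
    push_cast
    ring_nf
  -- fiberwise identification, plain values
  have hplain : HasSum (fun n : ℕ =>
      ((Nat.divisors (n + 1)).card : ℝ) * (1 / (((n : ℝ) + 1) + k) - 1 / ((n : ℝ) + 1)))
      (∑' p, Ffun k p) := by
    have h1 := hF.hasSum.tsum_fiberwise (fun p : ℕ × ℕ => (p.1 + 1) * (p.2 + 1) - 1)
    refine h1.congr_fun fun n => ?_
    have := fiber_tsum (Ffun k)
      (fun N : ℕ => 1 / ((N : ℝ) + k) - 1 / (N : ℝ))
      (fun p => by simp only [Ffun]; push_cast; ring_nf) n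
    rw [this]
    push_cast
    ring_nf
  refine ⟨habs.summable, ?_⟩
  -- inner sums
  have inner : ∀ a : ℕ, HasSum (fun b : ℕ => Ffun k (a, b))
      (-(1 / ((a : ℝ) + 1) * (digamma (1 + k / ((a : ℝ) + 1)) + γ))) := by
    intro a
    set A : ℝ := (a : ℝ) + 1 with hA
    have hApos : 0 < A := by positivity
    set x : ℝ := k / A with hx
    have hkeq : k = A * x := by rw [hx]; field_simp
    have hxc : ∀ m : ℕ, x + 1 ≠ -(m : ℝ) := by
      intro m h
      refine hk ((a + 1) * (m + 1)) (Nat.one_le_iff_ne_zero.mpr (by positivity)) ?_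
      push_cast
      rw [hkeq, hA]
      have hxm : x = -(m : ℝ) - 1 := by linarith
      rw [hxm]
      ring
    have HS := digamma_hasSum x hxc
    have HS2 : HasSum (fun b : ℕ => Ffun k (a, b)) ((-(1 / A)) * (digamma (1 + x) + γ)) := by
      refine (HS.mul_left (-(1 / A))).congr_fun fun b => ?_
      have hne : 1 + x + (b : ℝ) ≠ 0 := fun h => hxc b (by linarith)
      have hb : (1 : ℝ) + (b : ℝ) ≠ 0 := by positivity
      have hABeq : A * ((b : ℝ) + 1) + k = A * (1 + x + b) := by rw [hkeq]; ring
      show Ffun k (a, b) = _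
      simp only [Ffun, ← hA]
      rw [hABeq]
      field_simp
      ring
    convert HS2 using 1
    ring
  rw [hplain.tsum_eq, hF.tsum_prod' (fun a => (inner a).summable)]
  rw [tsum_congr (fun a => (inner a).tsum_eq), tsum_neg]
end

section
/- The function D(k²) := (1/2π) ∏_{n=1}^∞ (1 + k²/n²)^{d(n)} is entire in k, its zeros are exactly at k = ±i·l for l ∈ ℕ with order d(l), and it admits the factorization D(k²) = (1/2π) ∏_{n=1}^∞ sinh(πk/n)/(πk/n). -/
open Complex Finset Filter Topology

namespace Secular

/-- number of divisors -/
def dd (N : ℕ) : ℕ := (Nat.divisors N).card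

lemma dd_pos (N : ℕ) (hN : N ≠ 0) : 0 < dd N := by
  have : 1 ∈ Nat.divisors N := Nat.one_mem_divisors.2 hN
  exact Finset.card_pos.2 ⟨1, this⟩

noncomputable def ff (n : ℕ) (k : ℂ) : ℂ := 1 + k ^ 2 / ((n : ℂ) + 1) ^ 2

noncomputable def fac (n : ℕ) (k : ℂ) : ℂ := ff n k ^ dd (n + 1)

/-- If one factor is zero, the product has value zero. -/
lemma hasProd_zero {ι : Type*} {f : ι → ℂ} (i₀ : ι) (h : f i₀ = 0) : HasProd f 0 := by
  classical
  have he : (fun s : Finset ι => ∏ i ∈ s, f i) =ᶠ[atTop] fun _ => 0 := by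
    filter_upwards [eventually_ge_atTop ({i₀} : Finset ι)] with s hs
    exact Finset.prod_eq_zero (hs (Finset.mem_singleton_self i₀)) h
  exact Tendsto.congr' he.symm tendsto_const_nhds

/-- The divisor-pairing equivalence. -/
def divEquiv : (Σ N : ℕ, {a : ℕ // a ∈ Nat.divisors (N + 1)}) ≃ ℕ × ℕ where
  toFun x := (x.2.1 - 1, (x.1 + 1) / x.2.1 - 1)
  invFun p := ⟨(p.1 + 1) * (p.2 + 1) - 1,
    ⟨p.1 + 1, by
      rw [Nat.sub_add_cancel (Nat.mul_pos (Nat.succ_pos _) (Nat.succ_pos _))]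
      exact Nat.mem_divisors.2 ⟨⟨p.2 + 1, rfl⟩, (Nat.mul_pos (Nat.succ_pos _) (Nat.succ_pos _)).ne'⟩⟩⟩
  left_inv := by
    rintro ⟨N, a, ha⟩
    obtain ⟨hdvd, hN⟩ := Nat.mem_divisors.1 ha
    have ha1 : 1 ≤ a := Nat.pos_of_mem_divisors ha
    have hb1 : 1 ≤ (N + 1) / a := Nat.one_le_div_iff (by omega) |>.2 (Nat.le_of_dvd (by omega) hdvd)
    have hab : a * ((N + 1) / a) = N + 1 := Nat.mul_div_cancel' hdvd
    have e1 : a - 1 + 1 = a := by omega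
    have e2 : (N + 1) / a - 1 + 1 = (N + 1) / a := by omega
    apply Sigma.subtype_ext
    · show (a - 1 + 1) * ((N + 1) / a - 1 + 1) - 1 = N
      rw [e1, e2, hab]
      omega
    · exact e1
  right_inv := by
    rintro ⟨i, j⟩
    have h1 : (i + 1) * (j + 1) - 1 + 1 = (i + 1) * (j + 1) :=
      Nat.sub_add_cancel (Nat.mul_pos (Nat.succ_pos _) (Nat.succ_pos _))
    simp only [Prod.mk.injEq, h1]
    refine ⟨by omega, ?_⟩
    rw [Nat.mul_div_cancel_left _ (by omega)]
    omega

lemma divEquiv_symm_fst (p : ℕ × ℕ) :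
    (divEquiv.symm p).1 + 1 = (p.1 + 1) * (p.2 + 1) := by
  have : 1 ≤ (p.1 + 1) * (p.2 + 1) := Nat.mul_pos (Nat.succ_pos _) (Nat.succ_pos _)
  simp only [divEquiv, Equiv.coe_fn_symm_mk]
  omega

/-- regrouping of a doubly-indexed product into a divisor-counted product -/
lemma group_tprod {g : ℕ → ℂ}
    (hm : Multipliable (fun p : ℕ × ℕ => g ((p.1 + 1) * (p.2 + 1)))) :
    HasProd (fun N => g (N + 1) ^ dd (N + 1)) (∏' p : ℕ × ℕ, g ((p.1 + 1) * (p.2 + 1))) := by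
  set fs : (Σ N : ℕ, {a : ℕ // a ∈ Nat.divisors (N + 1)}) → ℂ := fun x => g (x.1 + 1) with hfs
  have hcomp : (fs ∘ divEquiv.symm) = fun p : ℕ × ℕ => g ((p.1 + 1) * (p.2 + 1)) := by
    funext p
    simp only [Function.comp_apply, hfs, divEquiv_symm_fst]
  have hms : Multipliable fs := divEquiv.symm.multipliable_iff.1 (by rw [hcomp]; exact hm)
  have htp : ∏' x, fs x = ∏' p : ℕ × ℕ, g ((p.1 + 1) * (p.2 + 1)) := by
    rw [← divEquiv.symm.tprod_eq fs]
    exact tprod_congr fun p => congrFun hcomp p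
  have hfib : ∀ N : ℕ, HasProd (fun a : {a : ℕ // a ∈ Nat.divisors (N + 1)} => fs ⟨N, a⟩)
      (g (N + 1) ^ dd (N + 1)) := by
    intro N
    have := hasProd_fintype (fun a : {a : ℕ // a ∈ Nat.divisors (N + 1)} => fs ⟨N, a⟩)
    simpa [fs, Finset.prod_const, Fintype.card_coe, dd] using this
  have := hms.hasProd.sigma hfib
  rwa [htp] at this

/-- additive version, for summability transfer -/
lemma group_summable {g : ℕ → ℝ}
    (hm : Summable (fun p : ℕ × ℕ => g ((p.1 + 1) * (p.2 + 1)))) :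
    Summable (fun N => (dd (N + 1) : ℝ) * g (N + 1)) := by
  set fs : (Σ N : ℕ, {a : ℕ // a ∈ Nat.divisors (N + 1)}) → ℝ := fun x => g (x.1 + 1) with hfs
  have hcomp : (fs ∘ divEquiv.symm) = fun p : ℕ × ℕ => g ((p.1 + 1) * (p.2 + 1)) := by
    funext p
    simp only [Function.comp_apply, hfs, divEquiv_symm_fst]
  have hms : Summable fs := divEquiv.symm.summable_iff.1 (by rw [hcomp]; exact hm)
  have hfib : ∀ N : ℕ, HasSum (fun a : {a : ℕ // a ∈ Nat.divisors (N + 1)} => fs ⟨N, a⟩)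
      ((dd (N + 1) : ℝ) * g (N + 1)) := by
    intro N
    have := hasSum_fintype (fun a : {a : ℕ // a ∈ Nat.divisors (N + 1)} => fs ⟨N, a⟩)
    simpa [fs, Finset.sum_const, Fintype.card_coe, dd, nsmul_eq_mul] using this
  exact (hms.hasSum.sigma hfib).summable

lemma base_summable : Summable (fun n : ℕ => 1 / ((n : ℝ) + 1) ^ 2) := by
  have := Real.summable_one_div_nat_pow.2 (show 1 < 2 by norm_num)
  have h2 := (summable_nat_add_iff 1).2 this
  apply h2.congr
  intro n
  push_cast
  ring

lemma pair_summable : Summable (fun p : ℕ × ℕ => 1 / (((p.1 + 1) * (p.2 + 1) : ℕ) : ℝ) ^ 2) := by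
  have := base_summable.mul_of_nonneg base_summable (fun n => by positivity) (fun n => by positivity)
  apply this.congr
  intro p
  push_cast
  rw [mul_pow, one_div_mul_one_div]

lemma dsum : Summable (fun N : ℕ => (dd (N + 1) : ℝ) * (1 / ((N : ℝ) + 1) ^ 2)) := by
  have := group_summable (g := fun t => 1 / (t : ℝ) ^ 2) (by
    apply pair_summable.congr
    intro p
    norm_num)
  apply this.congr
  intro N
  push_cast
  ring


/-- norms of the factors' deviation from 1, on a ball -/
lemma small_dev {R : ℝ} {N : ℕ} (hN : 2 * R ^ 2 ≤ N) {k : ℂ} (hk : ‖k‖ < R)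
    {n : ℕ} (hn : N ≤ n) : ‖k ^ 2 / ((n : ℂ) + 1) ^ 2‖ ≤ 1 / 2 := by
  have hc : ((n : ℂ) + 1) = ((n + 1 : ℕ) : ℂ) := by push_cast; ring
  have hnorm : ‖((n : ℂ) + 1) ^ 2‖ = ((n : ℝ) + 1) ^ 2 := by
    rw [norm_pow, hc, Complex.norm_natCast]; push_cast; ring
  rw [norm_div, norm_pow, hnorm]
  rw [div_le_iff₀ (by positivity)]
  have h1 : (N : ℝ) ≤ (n : ℝ) := by exact_mod_cast hn
  have h2 : ‖k‖ ^ 2 ≤ R ^ 2 := by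
    have := norm_nonneg k
    nlinarith
  nlinarith [norm_nonneg k, sq_nonneg ((n : ℝ) + 1)]

lemma ff_sub_one (n : ℕ) (k : ℂ) : ff n k - 1 = k ^ 2 / ((n : ℂ) + 1) ^ 2 := by
  simp [ff]

lemma ff_ne_zero_of_small {n : ℕ} {k : ℂ} (h : ‖k ^ 2 / ((n : ℂ) + 1) ^ 2‖ ≤ 1 / 2) :
    ff n k ≠ 0 := by
  intro h0
  have : ‖ff n k - 1‖ ≤ 1 / 2 := by rw [ff_sub_one]; exact h
  rw [h0] at this
  norm_num at this

lemma ff_mem_slitPlane {n : ℕ} {k : ℂ} (h : ‖k ^ 2 / ((n : ℂ) + 1) ^ 2‖ ≤ 1 / 2) :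
    ff n k ∈ Complex.slitPlane := by
  rw [Complex.mem_slitPlane_iff]
  left
  have h1 : |(ff n k - 1).re| ≤ 1 / 2 := by
    have h2 : ‖ff n k - 1‖ ≤ 1 / 2 := by rw [ff_sub_one]; exact h
    exact le_trans (Complex.abs_re_le_norm _) h2
  have h2 : (ff n k).re = 1 + (ff n k - 1).re := by simp
  rw [h2]
  cases abs_le.1 h1 with
  | intro hl hr => linarith

lemma ff_differentiable (n : ℕ) : Differentiable ℂ (ff n) := by
  unfold ff
  fun_prop

/-- Local representation of the infinite product on a ball. -/
lemma local_rep (R : ℝ) (hR : 0 < R) :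
    ∃ N : ℕ, ∃ L : ℂ → ℂ,
      DifferentiableOn ℂ L (Metric.ball (0 : ℂ) R) ∧
      ∀ k ∈ Metric.ball (0 : ℂ) R,
        (∀ n, N ≤ n → ff n k ≠ 0) ∧
        (∏' n, fac n k) = (∏ n ∈ Finset.range N, fac n k) * Complex.exp (L k) := by
  obtain ⟨N, hN⟩ := exists_nat_ge (2 * R ^ 2)
  have hmem : ∀ k ∈ Metric.ball (0 : ℂ) R, ‖k‖ < R := by
    intro k hk
    simpa [Metric.mem_ball, dist_eq_norm] using hk
  have hsmall : ∀ k ∈ Metric.ball (0 : ℂ) R, ∀ n, N ≤ n →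
      ‖k ^ 2 / ((n : ℂ) + 1) ^ 2‖ ≤ 1 / 2 := fun k hk n hn => small_dev hN (hmem k hk) hn
  refine ⟨N, fun k => ∑' n : ℕ, (dd (n + N + 1) : ℂ) * Complex.log (ff (n + N) k), ?_, ?_⟩
  -- summable majorant
  case' _ =>
    skip
  all_goals
    have hu : Summable (fun n : ℕ => (dd (n + N + 1) : ℝ) * ((3 / 2) * (R ^ 2 / ((n + N : ℝ) + 1) ^ 2))) := by
      have h0 : Summable (fun m : ℕ => (dd (m + 1) : ℝ) * ((3 / 2) * (R ^ 2 / ((m : ℝ) + 1) ^ 2))) := by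
        apply (dsum.mul_right ((3 / 2) * R ^ 2)).congr
        intro m
        ring
      have := (summable_nat_add_iff N).2 h0
      apply this.congr
      intro n
      push_cast
      ring_nf
    have hbound : ∀ (n : ℕ) (k : ℂ), k ∈ Metric.ball (0 : ℂ) R →
        ‖(dd (n + N + 1) : ℂ) * Complex.log (ff (n + N) k)‖ ≤
          (dd (n + N + 1) : ℝ) * ((3 / 2) * (R ^ 2 / ((n + N : ℝ) + 1) ^ 2)) := by
      intro n k hk
      rw [norm_mul, Complex.norm_natCast]
      refine mul_le_mul_of_nonneg_left ?_ (Nat.cast_nonneg _)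
      have hsm := hsmall k hk (n + N) (Nat.le_add_left N n)
      have hlog : ‖Complex.log (ff (n + N) k)‖ ≤ (3 / 2) * ‖k ^ 2 / (((n + N : ℕ) : ℂ) + 1) ^ 2‖ := by
        have := Complex.norm_log_one_add_half_le_self (z := k ^ 2 / (((n + N : ℕ) : ℂ) + 1) ^ 2) (by exact_mod_cast hsm)
        simpa [ff] using this
      refine le_trans hlog ?_
      have hnn : ‖k ^ 2 / (((n + N : ℕ) : ℂ) + 1) ^ 2‖ ≤ R ^ 2 / ((n + N : ℝ) + 1) ^ 2 := by
        have hc : (((n + N : ℕ) : ℂ) + 1) = (((n + N + 1 : ℕ)) : ℂ) := by push_cast; ring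
        rw [norm_div, norm_pow, norm_pow, hc, Complex.norm_natCast]
        have h1 : ‖k‖ ^ 2 ≤ R ^ 2 := by nlinarith [hmem k hk, norm_nonneg k]
        have h2 : ((n + N : ℝ) + 1) ^ 2 = ((n + N + 1 : ℕ) : ℝ) ^ 2 := by push_cast; ring
        rw [h2]
        apply div_le_div_of_nonneg_right h1 ?_ |>.trans_eq rfl
        · positivity
      nlinarith [hnn]
  · -- differentiability of L on the ball
    apply differentiableOn_tsum_of_summable_norm hu ?_ Metric.isOpen_ball hbound
    intro n
    apply DifferentiableOn.mul (differentiableOn_const _)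
    intro k hk
    apply DifferentiableAt.differentiableWithinAt
    apply DifferentiableAt.clog ((ff_differentiable (n + N)) k)
    exact ff_mem_slitPlane (hsmall k hk (n + N) (Nat.le_add_left N n))
  · -- product splitting
    intro k hk
    have htail_ne : ∀ n, N ≤ n → ff n k ≠ 0 := fun n hn =>
      ff_ne_zero_of_small (hsmall k hk n hn)
    refine ⟨htail_ne, ?_⟩
    -- HasSum of the logs
    have hsum : Summable (fun n : ℕ => (dd (n + N + 1) : ℂ) * Complex.log (ff (n + N) k)) :=
      Summable.of_norm_bounded hu (fun n => hbound n k hk)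
    have heq : (Complex.exp ∘ fun n : ℕ => (dd (n + N + 1) : ℂ) * Complex.log (ff (n + N) k))
        = fun n => fac (n + N) k := by
      funext n
      show Complex.exp ((dd (n + N + 1) : ℂ) * Complex.log (ff (n + N) k)) = fac (n + N) k
      rw [Complex.exp_nat_mul, Complex.exp_log (htail_ne (n + N) (Nat.le_add_left N n))]
      rfl
    have hprod : HasProd (fun n => fac (n + N) k)
        (Complex.exp (∑' n : ℕ, (dd (n + N + 1) : ℂ) * Complex.log (ff (n + N) k))) :=
      heq ▸ hsum.hasSum.cexp
    have hmult : Multipliable (fun n => fac (n + N) k) := hprod.multipliable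
    rw [← Multipliable.prod_mul_tprod_nat_mul' (f := fun n => fac n k) (k := N) hmult]
    congr 1
    exact hprod.tprod_eq


lemma norm_factor (k : ℂ) (t : ℕ) (ht : 0 < t) :
    ‖k ^ 2 / ((t : ℕ) : ℂ) ^ 2‖ = ‖k‖ ^ 2 / (t : ℝ) ^ 2 := by
  rw [norm_div, norm_pow, norm_pow, Complex.norm_natCast]

/-- Euler's product for sinh(πk/(n+1))/(πk/(n+1)). -/
lemma hasProd_sinh (k : ℂ) (hk : k ≠ 0) (n : ℕ) :
    HasProd (fun m : ℕ => 1 + k ^ 2 / ((((n + 1) * (m + 1) : ℕ)) : ℂ) ^ 2)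
      (Complex.sinh ((Real.pi : ℂ) * k / ((n : ℂ) + 1)) /
        ((Real.pi : ℂ) * k / ((n : ℂ) + 1))) := by
  have hn1 : ((n : ℂ) + 1) ≠ 0 := by
    intro h
    have : ((n + 1 : ℕ) : ℂ) = 0 := by push_cast; linear_combination h
    exact_mod_cast this
  set w : ℂ := k / ((n : ℂ) + 1) with hw_def
  have hw : w ≠ 0 := div_ne_zero hk hn1
  set z : ℂ := Complex.I * w with hz_def
  have hz : z ≠ 0 := mul_ne_zero Complex.I_ne_zero hw
  have hpi : (Real.pi : ℂ) ≠ 0 := by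
    simpa using Complex.ofReal_ne_zero.2 Real.pi_ne_zero
  have hz2 : z ^ 2 = -(k ^ 2 / ((n : ℂ) + 1) ^ 2) := by
    rw [hz_def, hw_def, mul_pow, Complex.I_sq, div_pow]
    ring
  have hfeq : ∀ m : ℕ, (1 : ℂ) + k ^ 2 / ((((n + 1) * (m + 1) : ℕ)) : ℂ) ^ 2
      = 1 - z ^ 2 / ((m : ℂ) + 1) ^ 2 := by
    intro m
    rw [hz2]
    have hm1 : ((m : ℂ) + 1) ≠ 0 := by
      intro h
      have : ((m + 1 : ℕ) : ℂ) = 0 := by push_cast; linear_combination h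
      exact_mod_cast this
    push_cast
    field_simp
    ring
  -- main: HasProd for 1 - z²/(m+1)² with value sin(πz)/(πz)
  have key : HasProd (fun m : ℕ => 1 - z ^ 2 / ((m : ℂ) + 1) ^ 2)
      (Complex.sin ((Real.pi : ℂ) * z) / ((Real.pi : ℂ) * z)) := by
    by_cases hzero : ∃ m : ℕ, 1 - z ^ 2 / ((m : ℂ) + 1) ^ 2 = 0
    · obtain ⟨m, hm⟩ := hzero
      have hm1 : ((m : ℂ) + 1) ≠ 0 := by
        intro h
        have : ((m + 1 : ℕ) : ℂ) = 0 := by push_cast; linear_combination h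
        exact_mod_cast this
      have hz2m : z ^ 2 = ((m : ℂ) + 1) ^ 2 := by
        field_simp at hm
        linear_combination -hm
      have hfac : (z - ((m : ℂ) + 1)) * (z + ((m : ℂ) + 1)) = 0 := by
        linear_combination hz2m
      have hsin : Complex.sin ((Real.pi : ℂ) * z) = 0 := by
        rcases mul_eq_zero.1 hfac with h | h
        · have hzeq : z = ((m : ℂ) + 1) := by linear_combination h
          rw [Complex.sin_eq_zero_iff]
          exact ⟨(m : ℤ) + 1, by rw [hzeq]; push_cast; ring⟩
        · have hzeq : z = -((m : ℂ) + 1) := by linear_combination h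
          rw [Complex.sin_eq_zero_iff]
          exact ⟨-((m : ℤ) + 1), by rw [hzeq]; push_cast; ring⟩
      rw [hsin, zero_div]
      exact hasProd_zero m hm
    · push_neg at hzero
      -- summability of logs
      obtain ⟨T, hT⟩ := exists_nat_ge (2 * ‖z‖ ^ 2)
      have hlog : Summable (fun m : ℕ => Complex.log (1 - z ^ 2 / ((m : ℂ) + 1) ^ 2)) := by
        apply Summable.of_norm_bounded_eventually
          (g := fun m : ℕ => (3 / 2 * ‖z‖ ^ 2) * (1 / ((m : ℝ) + 1) ^ 2))
          (base_summable.mul_left _)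
        rw [Nat.cofinite_eq_atTop]
        filter_upwards [eventually_ge_atTop T] with m hm
        have hm1 : ((m : ℝ) + 1) ≠ 0 := by positivity
        have hnq : ‖z ^ 2 / ((m : ℂ) + 1) ^ 2‖ = ‖z‖ ^ 2 / ((m : ℝ) + 1) ^ 2 := by
          have hc : ((m : ℂ) + 1) = ((m + 1 : ℕ) : ℂ) := by push_cast; ring
          rw [norm_div, norm_pow, norm_pow, hc, Complex.norm_natCast]
          push_cast
          ring
        have hsmall : ‖z ^ 2 / ((m : ℂ) + 1) ^ 2‖ ≤ 1 / 2 := by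
          rw [hnq]
          rw [div_le_iff₀ (by positivity)]
          have h1 : (T : ℝ) ≤ (m : ℝ) := by exact_mod_cast hm
          nlinarith [norm_nonneg z, sq_nonneg ((m : ℝ) + 1)]
        have := Complex.norm_log_one_add_half_le_self
          (z := -(z ^ 2 / ((m : ℂ) + 1) ^ 2)) (by rwa [norm_neg])
        have heq : (1 : ℂ) + -(z ^ 2 / ((m : ℂ) + 1) ^ 2) = 1 - z ^ 2 / ((m : ℂ) + 1) ^ 2 := by
          ring
        rw [heq, norm_neg, hnq] at this
        refine this.trans ?_
        rw [div_eq_mul_one_div]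
        ring_nf
        exact le_refl _
      have heq2 : (Complex.exp ∘ fun m : ℕ => Complex.log (1 - z ^ 2 / ((m : ℂ) + 1) ^ 2))
          = fun m : ℕ => 1 - z ^ 2 / ((m : ℂ) + 1) ^ 2 := by
        funext m
        exact Complex.exp_log (hzero m)
      have hprod0 : HasProd (fun m : ℕ => 1 - z ^ 2 / ((m : ℂ) + 1) ^ 2)
          (Complex.exp (∑' m : ℕ, Complex.log (1 - z ^ 2 / ((m : ℂ) + 1) ^ 2))) :=
        heq2 ▸ hlog.hasSum.cexp
      set P : ℂ := Complex.exp (∑' m : ℕ, Complex.log (1 - z ^ 2 / ((m : ℂ) + 1) ^ 2)) with hP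
      have htend := hprod0.tendsto_prod_nat
      have htend2 : Tendsto (fun t : ℕ => (Real.pi : ℂ) * z *
          ∏ j ∈ Finset.range t, (1 - z ^ 2 / ((j : ℂ) + 1) ^ 2)) atTop
          (𝓝 ((Real.pi : ℂ) * z * P)) := tendsto_const_nhds.mul htend
      have heuler := Complex.tendsto_euler_sin_prod z
      have hval : Complex.sin ((Real.pi : ℂ) * z) = (Real.pi : ℂ) * z * P :=
        tendsto_nhds_unique heuler htend2
      have hPz : P = Complex.sin ((Real.pi : ℂ) * z) / ((Real.pi : ℂ) * z) := by
        rw [hval]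
        field_simp
      rwa [hPz] at hprod0
  -- convert to sinh
  have hsin_sinh : Complex.sin ((Real.pi : ℂ) * z) / ((Real.pi : ℂ) * z)
      = Complex.sinh ((Real.pi : ℂ) * k / ((n : ℂ) + 1)) /
        ((Real.pi : ℂ) * k / ((n : ℂ) + 1)) := by
    have h1 : (Real.pi : ℂ) * z = ((Real.pi : ℂ) * w) * Complex.I := by
      rw [hz_def]; ring
    have h2 : (Real.pi : ℂ) * w = (Real.pi : ℂ) * k / ((n : ℂ) + 1) := by
      rw [hw_def]; ring
    rw [h1, Complex.sin_mul_I, h2, mul_div_mul_right _ _ Complex.I_ne_zero]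
  rw [← hsin_sinh]
  exact (funext hfeq : _) ▸ key

/-- Multipliability of the double product. -/
lemma multipliable_pairs (k : ℂ) :
    Multipliable (fun p : ℕ × ℕ => 1 + k ^ 2 / ((((p.1 + 1) * (p.2 + 1) : ℕ)) : ℂ) ^ 2) := by
  by_cases hzero : ∃ p : ℕ × ℕ, 1 + k ^ 2 / ((((p.1 + 1) * (p.2 + 1) : ℕ)) : ℂ) ^ 2 = 0
  · obtain ⟨p, hp⟩ := hzero
    exact (hasProd_zero p hp).multipliable
  · push_neg at hzero
    obtain ⟨T, hT⟩ := exists_nat_ge (2 * ‖k‖ ^ 2)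
    have hlog : Summable (fun p : ℕ × ℕ =>
        Complex.log (1 + k ^ 2 / ((((p.1 + 1) * (p.2 + 1) : ℕ)) : ℂ) ^ 2)) := by
      apply Summable.of_norm_bounded_eventually
        (g := fun p : ℕ × ℕ => (3 / 2 * ‖k‖ ^ 2) * (1 / ((p.1 : ℝ) + 1) ^ 2 * (1 / ((p.2 : ℝ) + 1) ^ 2)))
        ((base_summable.mul_of_nonneg base_summable (fun _ => by positivity)
          (fun _ => by positivity)).mul_left _)
      have hbound : ∀ p : ℕ × ℕ, T ≤ p.1 ∨ T ≤ p.2 →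
          ‖Complex.log (1 + k ^ 2 / ((((p.1 + 1) * (p.2 + 1) : ℕ)) : ℂ) ^ 2)‖ ≤
            (3 / 2 * ‖k‖ ^ 2) * (1 / ((p.1 : ℝ) + 1) ^ 2 * (1 / ((p.2 : ℝ) + 1) ^ 2)) := by
        rintro ⟨i, j⟩ hij
        have hpos : (0 : ℝ) < ((i : ℝ) + 1) * ((j : ℝ) + 1) := by positivity
        have hnq : ‖k ^ 2 / ((((i + 1) * (j + 1) : ℕ)) : ℂ) ^ 2‖
            = ‖k‖ ^ 2 / (((i : ℝ) + 1) * ((j : ℝ) + 1)) ^ 2 := by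
          rw [norm_div, norm_pow, norm_pow, Complex.norm_natCast]
          push_cast
          ring
        have hbig : (T : ℝ) + 1 ≤ ((i : ℝ) + 1) * ((j : ℝ) + 1) := by
          rcases hij with h | h
          · have h1 : (T : ℝ) ≤ (i : ℝ) := by exact_mod_cast h
            nlinarith [Nat.cast_nonneg (α := ℝ) j]
          · have h1 : (T : ℝ) ≤ (j : ℝ) := by exact_mod_cast h
            nlinarith [Nat.cast_nonneg (α := ℝ) i]
        have hsmall : ‖k ^ 2 / ((((i + 1) * (j + 1) : ℕ)) : ℂ) ^ 2‖ ≤ 1 / 2 := by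
          rw [hnq, div_le_iff₀ (by positivity)]
          nlinarith [norm_nonneg k, sq_nonneg (((i : ℝ) + 1) * ((j : ℝ) + 1))]
        have := Complex.norm_log_one_add_half_le_self
          (z := k ^ 2 / ((((i + 1) * (j + 1) : ℕ)) : ℂ) ^ 2) hsmall
        refine this.trans (le_of_eq ?_)
        rw [hnq]
        simp only [div_eq_mul_inv, mul_inv, one_div, mul_pow]
        ring
      have hfin : {p : ℕ × ℕ | ¬ ‖Complex.log (1 + k ^ 2 /
          ((((p.1 + 1) * (p.2 + 1) : ℕ)) : ℂ) ^ 2)‖ ≤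
            (3 / 2 * ‖k‖ ^ 2) * (1 / ((p.1 : ℝ) + 1) ^ 2 * (1 / ((p.2 : ℝ) + 1) ^ 2))}.Finite := by
        apply Set.Finite.subset ((Finset.range T ×ˢ Finset.range T).finite_toSet)
        intro p hp
        simp only [Set.mem_setOf_eq] at hp
        simp only [Finset.coe_product, Set.mem_prod, Finset.mem_coe, Finset.mem_range]
        by_contra hcon
        push_neg at hcon
        rcases Nat.lt_or_ge p.1 T with h1 | h1
        · exact hp (hbound p (Or.inr (by omega)))
        · exact hp (hbound p (Or.inl h1))
      exact hfin
    have heq2 : (Complex.exp ∘ fun p : ℕ × ℕ =>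
        Complex.log (1 + k ^ 2 / ((((p.1 + 1) * (p.2 + 1) : ℕ)) : ℂ) ^ 2))
        = fun p : ℕ × ℕ => 1 + k ^ 2 / ((((p.1 + 1) * (p.2 + 1) : ℕ)) : ℂ) ^ 2 := by
      funext p
      exact Complex.exp_log (hzero p)
    exact (heq2 ▸ hlog.hasSum.cexp).multipliable


noncomputable def FF (k : ℂ) : ℂ := (1 / (2 * (Real.pi : ℂ))) * ∏' n : ℕ, fac n k

lemma c_ne : (1 / (2 * (Real.pi : ℂ))) ≠ 0 := by
  apply one_div_ne_zero
  apply mul_ne_zero two_ne_zero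
  simpa using Complex.ofReal_ne_zero.2 Real.pi_ne_zero

/-- The sinh factorization of the product. -/
lemma tprod_fac_eq_sinh (k : ℂ) (hk : k ≠ 0) :
    (∏' n, fac n k) = ∏' n : ℕ, Complex.sinh ((Real.pi : ℂ) * k / ((n : ℂ) + 1)) /
      ((Real.pi : ℂ) * k / ((n : ℂ) + 1)) := by
  have hG := multipliable_pairs k
  have hinner : ∀ n : ℕ, HasProd
      (fun m : ℕ => 1 + k ^ 2 / ((((n + 1) * (m + 1) : ℕ)) : ℂ) ^ 2)
      (Complex.sinh ((Real.pi : ℂ) * k / ((n : ℂ) + 1)) /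
        ((Real.pi : ℂ) * k / ((n : ℂ) + 1))) := hasProd_sinh k hk
  have houter : HasProd
      (fun n : ℕ => Complex.sinh ((Real.pi : ℂ) * k / ((n : ℂ) + 1)) /
        ((Real.pi : ℂ) * k / ((n : ℂ) + 1)))
      (∏' p : ℕ × ℕ, (1 + k ^ 2 / ((((p.1 + 1) * (p.2 + 1) : ℕ)) : ℂ) ^ 2)) :=
    hG.hasProd.prod_fiberwise hinner
  have hgroup := group_tprod (g := fun t : ℕ => 1 + k ^ 2 / ((t : ℂ)) ^ 2) hG
  have hfaceq : (fun N : ℕ => (1 + k ^ 2 / (((N + 1 : ℕ)) : ℂ) ^ 2) ^ dd (N + 1))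
      = fun N => fac N k := by
    funext N
    have hc : (((N + 1 : ℕ)) : ℂ) = (N : ℂ) + 1 := by push_cast; ring
    rw [hc]
    rfl
  have h1 : (∏' n, fac n k) =
      ∏' p : ℕ × ℕ, (1 + k ^ 2 / ((((p.1 + 1) * (p.2 + 1) : ℕ)) : ℂ) ^ 2) :=
    (hfaceq ▸ hgroup).tprod_eq
  rw [h1, ← houter.tprod_eq]

lemma differentiable_finprod (N : ℕ) :
    Differentiable ℂ (fun k => ∏ n ∈ Finset.range N, fac n k) := by
  apply Differentiable.fun_finsetProd
  intro i _
  exact (ff_differentiable i).pow _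

theorem secular_determinant' :
    ∃ F : ℂ → ℂ,
      Differentiable ℂ F ∧
      (∀ k : ℂ, F k = (1 / (2 * (Real.pi : ℂ))) *
          ∏' n : ℕ, (1 + k ^ 2 / ((n : ℂ) + 1) ^ 2) ^ (Nat.divisors (n + 1)).card) ∧
      (∀ k : ℂ, F k = 0 ↔ ∃ l : ℕ, 1 ≤ l ∧ (k = Complex.I * l ∨ k = -(Complex.I * l))) ∧
      (∀ l : ℕ, 1 ≤ l → ∀ k₀ : ℂ, (k₀ = Complex.I * l ∨ k₀ = -(Complex.I * l)) →
        ∃ g : ℂ → ℂ, AnalyticAt ℂ g k₀ ∧ g k₀ ≠ 0 ∧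
          ∀ᶠ k in nhds k₀, F k = (k - k₀) ^ (Nat.divisors l).card * g k) ∧
      (∀ k : ℂ, k ≠ 0 → F k = (1 / (2 * (Real.pi : ℂ))) *
          ∏' n : ℕ, Complex.sinh ((Real.pi : ℂ) * k / ((n : ℂ) + 1))
            / ((Real.pi : ℂ) * k / ((n : ℂ) + 1))) := by
  refine ⟨FF, ?_, fun k => rfl, ?_, ?_, ?_⟩
  · -- differentiability
    intro k₀
    set R : ℝ := ‖k₀‖ + 1 with hR_def
    have hR : 0 < R := by positivity
    obtain ⟨N, L, hL, hrep⟩ := local_rep R hR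
    have hball : k₀ ∈ Metric.ball (0 : ℂ) R := by
      simp [Metric.mem_ball, dist_eq_norm, hR_def]
    have hdiff : DifferentiableOn ℂ
        (fun k => (1 / (2 * (Real.pi : ℂ))) *
          ((∏ n ∈ Finset.range N, fac n k) * Complex.exp (L k))) (Metric.ball (0 : ℂ) R) := by
      apply DifferentiableOn.const_mul
      exact ((differentiable_finprod N).differentiableOn).mul hL.cexp
    have heq : FF =ᶠ[nhds k₀] (fun k => (1 / (2 * (Real.pi : ℂ))) *
        ((∏ n ∈ Finset.range N, fac n k) * Complex.exp (L k))) := by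
      filter_upwards [Metric.isOpen_ball.mem_nhds hball] with k hk
      rw [FF, (hrep k hk).2]
    rw [heq.differentiableAt_iff]
    exact (hdiff.differentiableAt (Metric.isOpen_ball.mem_nhds hball))
  · -- zeros
    intro k
    constructor
    · intro hFk
      set R : ℝ := ‖k‖ + 1 with hR_def
      have hR : 0 < R := by positivity
      obtain ⟨N, L, hL, hrep⟩ := local_rep R hR
      have hball : k ∈ Metric.ball (0 : ℂ) R := by
        simp [Metric.mem_ball, dist_eq_norm, hR_def]
      have h0 : (∏ n ∈ Finset.range N, fac n k) * Complex.exp (L k) = 0 := by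
        have := hFk
        rw [FF, (hrep k hball).2] at this
        exact (mul_eq_zero.1 this).resolve_left c_ne
      have hprod0 : (∏ n ∈ Finset.range N, fac n k) = 0 :=
        (mul_eq_zero.1 h0).resolve_right (Complex.exp_ne_zero _)
      obtain ⟨n, _, hfac0⟩ := Finset.prod_eq_zero_iff.1 hprod0
      have hff0 : ff n k = 0 :=
        pow_eq_zero_iff (dd_pos (n + 1) (Nat.succ_ne_zero n)).ne' |>.1 hfac0
      have hden : ((n : ℂ) + 1) ≠ 0 := by
        intro h
        have : ((n + 1 : ℕ) : ℂ) = 0 := by push_cast; linear_combination h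
        exact_mod_cast this
      have hsq : k ^ 2 + ((n : ℂ) + 1) ^ 2 = 0 := by
        have h' : (1 : ℂ) + k ^ 2 / ((n : ℂ) + 1) ^ 2 = 0 := hff0
        field_simp at h'
        linear_combination h'
      have hfac2 : (k - Complex.I * ((n : ℂ) + 1)) * (k + Complex.I * ((n : ℂ) + 1)) = 0 := by
        linear_combination hsq - ((n : ℂ) + 1) ^ 2 * Complex.I_sq
      refine ⟨n + 1, Nat.le_add_left 1 n, ?_⟩
      have hcast : ((n + 1 : ℕ) : ℂ) = (n : ℂ) + 1 := by push_cast; ring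
      rcases mul_eq_zero.1 hfac2 with h | h
      · left
        rw [hcast]
        linear_combination h
      · right
        rw [hcast]
        linear_combination h
    · rintro ⟨l, hl, hkl⟩
      have hlc : ((l : ℂ)) ≠ 0 := Nat.cast_ne_zero.2 (by omega)
      have hcast : (((l - 1 : ℕ)) : ℂ) + 1 = (l : ℂ) := by
        have h1 : (l - 1) + 1 = l := Nat.succ_pred_eq_of_pos hl
        exact_mod_cast congrArg (Nat.cast (R := ℂ)) h1
      have hk2 : k ^ 2 = -((l : ℂ)) ^ 2 := by
        rcases hkl with h | h <;> rw [h] <;>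
          linear_combination ((l : ℂ)) ^ 2 * Complex.I_sq
      have hff0 : ff (l - 1) k = 0 := by
        rw [ff, hcast, hk2]
        field_simp
        norm_num
      have hfac0 : fac (l - 1) k = 0 := by
        rw [fac, hff0]
        exact zero_pow (dd_pos _ (Nat.succ_ne_zero _)).ne'
      rw [FF, (hasProd_zero (l - 1) hfac0).tprod_eq, mul_zero]
  · -- order of zeros
    intro l hl k₀ hk₀
    have hlc : ((l : ℂ)) ≠ 0 := Nat.cast_ne_zero.2 (by omega)
    have hk₀sq : k₀ ^ 2 = -((l : ℂ)) ^ 2 := by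
      rcases hk₀ with h | h <;> rw [h] <;>
        linear_combination ((l : ℂ)) ^ 2 * Complex.I_sq
    have hk₀ne : k₀ ≠ 0 := by
      intro h
      rw [h] at hk₀sq
      have : ((l : ℂ)) ^ 2 = 0 := by linear_combination hk₀sq
      exact hlc (pow_eq_zero_iff (two_ne_zero) |>.1 this)
    set R : ℝ := ‖k₀‖ + 1 with hR_def
    have hR : 0 < R := by positivity
    obtain ⟨N, L, hL, hrep⟩ := local_rep R hR
    have hball : k₀ ∈ Metric.ball (0 : ℂ) R := by
      simp [Metric.mem_ball, dist_eq_norm, hR_def]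
    have hcast : (((l - 1 : ℕ)) : ℂ) + 1 = (l : ℂ) := by
      have h1 : (l - 1) + 1 = l := Nat.succ_pred_eq_of_pos hl
      exact_mod_cast congrArg (Nat.cast (R := ℂ)) h1
    have hff0 : ff (l - 1) k₀ = 0 := by
      rw [ff, hcast, hk₀sq]
      field_simp
      norm_num
    have hlN : l - 1 < N := by
      by_contra hcon
      push_neg at hcon
      exact (hrep k₀ hball).1 (l - 1) hcon hff0
    have hdl : dd ((l - 1) + 1) = dd l := by
      have h1 : l - 1 + 1 = l := by omega
      rw [h1]
    -- the witness function
    set d : ℕ := dd l with hd_def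
    refine ⟨fun k => (1 / (2 * (Real.pi : ℂ))) * ((k + k₀) ^ d / ((l : ℂ)) ^ (2 * d)) *
      ((∏ n ∈ (Finset.range N).erase (l - 1), fac n k) * Complex.exp (L k)), ?_, ?_, ?_⟩
    · -- AnalyticAt
      apply DifferentiableOn.analyticAt (s := Metric.ball (0 : ℂ) R) ?_
        (Metric.isOpen_ball.mem_nhds hball)
      apply DifferentiableOn.mul ?_ ?_
      · apply DifferentiableOn.const_mul
        apply DifferentiableOn.div_const
        exact ((differentiable_id.add_const k₀).pow d).differentiableOn
      · refine DifferentiableOn.mul ?_ hL.cexp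
        apply Differentiable.differentiableOn
        apply Differentiable.fun_finsetProd
        intro i _
        exact (ff_differentiable i).pow _
    · -- nonvanishing at k₀
      apply mul_ne_zero
      · apply mul_ne_zero c_ne
        apply div_ne_zero
        · have : k₀ + k₀ = 2 * k₀ := by ring
          rw [this]
          exact pow_ne_zero _ (mul_ne_zero two_ne_zero hk₀ne)
        · exact pow_ne_zero _ hlc
      · apply mul_ne_zero ?_ (Complex.exp_ne_zero _)
        rw [Finset.prod_ne_zero_iff]
        intro n hn
        have hne : n ≠ l - 1 := Finset.ne_of_mem_erase hn
        apply pow_ne_zero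
        intro hff
        have hden : ((n : ℂ) + 1) ≠ 0 := by
          intro h
          have : ((n + 1 : ℕ) : ℂ) = 0 := by push_cast; linear_combination h
          exact_mod_cast this
        have hsq : k₀ ^ 2 + ((n : ℂ) + 1) ^ 2 = 0 := by
          have h' : (1 : ℂ) + k₀ ^ 2 / ((n : ℂ) + 1) ^ 2 = 0 := hff
          field_simp at h'
          linear_combination h'
        have hsq2 : ((l : ℂ)) ^ 2 = ((n : ℂ) + 1) ^ 2 := by
          linear_combination hk₀sq - hsq
        have hfac2 : ((l : ℂ) - ((n : ℂ) + 1)) * ((l : ℂ) + ((n : ℂ) + 1)) = 0 := by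
          linear_combination hsq2
        rcases mul_eq_zero.1 hfac2 with h | h
        · have : ((l : ℕ) : ℂ) = ((n + 1 : ℕ) : ℂ) := by push_cast; linear_combination h
          have hln : l = n + 1 := Nat.cast_injective this
          omega
        · have : ((l + n + 1 : ℕ) : ℂ) = 0 := by push_cast; linear_combination h
          have : l + n + 1 = 0 := Nat.cast_eq_zero.1 this
          omega
    · -- eventual equality
      filter_upwards [Metric.isOpen_ball.mem_nhds hball] with k hk
      rw [show FF k = (1 / (2 * (Real.pi : ℂ))) *
        ((∏ n ∈ Finset.range N, fac n k) * Complex.exp (L k)) from by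
          rw [FF, (hrep k hk).2]]
      rw [← Finset.mul_prod_erase (Finset.range N) (fun n => fac n k)
        (Finset.mem_range.2 hlN)]
      have hfacrw : fac (l - 1) k = (k - k₀) ^ d * ((k + k₀) ^ d / ((l : ℂ)) ^ (2 * d)) := by
        rw [fac, hdl]
        have hffk : ff (l - 1) k = (k - k₀) * (k + k₀) / ((l : ℂ)) ^ 2 := by
          rw [ff, hcast]
          field_simp
          linear_combination hk₀sq
        rw [hffk, div_pow, mul_pow, pow_mul]
        ring
      rw [hfacrw]
      have hdd : (Nat.divisors l).card = d := rfl
      rw [hdd]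
      ring
  · -- sinh factorization
    intro k hk
    rw [FF, tprod_fac_eq_sinh k hk]

end Secular


/-- The function `D(k²) = (1/2π) ∏ₙ (1 + k²/n²)^{d(n)}` is entire in `k`, its zeros are
exactly `k = ± i l`, `l ∈ ℕ`, `l ≥ 1`, with order `d(l)`, and it admits the factorization
`D(k²) = (1/2π) ∏ₙ sinh(πk/n)/(πk/n)` (for `k ≠ 0`, where no factor is singular). -/
theorem secular_determinant :
    ∃ F : ℂ → ℂ,
      Differentiable ℂ F ∧
      (∀ k : ℂ, F k = (1 / (2 * (Real.pi : ℂ))) *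
          ∏' n : ℕ, (1 + k ^ 2 / ((n : ℂ) + 1) ^ 2) ^ (Nat.divisors (n + 1)).card) ∧
      (∀ k : ℂ, F k = 0 ↔ ∃ l : ℕ, 1 ≤ l ∧ (k = Complex.I * l ∨ k = -(Complex.I * l))) ∧
      (∀ l : ℕ, 1 ≤ l → ∀ k₀ : ℂ, (k₀ = Complex.I * l ∨ k₀ = -(Complex.I * l)) →
        ∃ g : ℂ → ℂ, AnalyticAt ℂ g k₀ ∧ g k₀ ≠ 0 ∧
          ∀ᶠ k in nhds k₀, F k = (k - k₀) ^ (Nat.divisors l).card * g k) ∧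
      (∀ k : ℂ, k ≠ 0 → F k = (1 / (2 * (Real.pi : ℂ))) *
          ∏' n : ℕ, Complex.sinh ((Real.pi : ℂ) * k / ((n : ℂ) + 1))
            / ((Real.pi : ℂ) * k / ((n : ℂ) + 1))) :=
  Secular.secular_determinant'
end
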